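/- arXiv:1508.06466 — 11 statements merged into one kernel-verified Lean document; each statement's English description precedes it below -/
import Mathlib

section
/- Let α, β be real numbers with 0 < β < α < b, b ≥ 2 an integer, and suppose (b^k − β)/α is not an integer for every k ≥ 1. For n large enough, ⌊log_b(α(n+1) + β)⌋ − ⌊log_b(αn + β)⌋ = 1 if and only if there exists an integer k ≥ 1 with n = ⌊(b^k − β)/α⌋. -/
theorem stmt_2 (α β : ℝ) (b : ℕ) (hb : 2 ≤ b) (hβ : 0 < β) (hβα : β < α) (hαb : α < b)
    (hnotint : ∀ k : ℕ, 1 ≤ k → ∀ m : ℤ, ((b : ℝ) ^ k - β) / α ≠ (m : ℝ)) :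
    ∃ N : ℕ, ∀ n ≥ N,
      (⌊Real.logb b (α * (n + 1) + β)⌋ - ⌊Real.logb b (α * n + β)⌋ = 1 ↔
        ∃ k : ℕ, 1 ≤ k ∧ (n : ℤ) = ⌊((b : ℝ) ^ k - β) / α⌋) := by
  have hα : 0 < α := hβ.trans hβα
  have hb1 : (1:ℕ) < b := hb
  have hbR : (1:ℝ) < b := by exact_mod_cast hb1
  refine ⟨⌈α⁻¹⌉₊ + 1, fun n hn => ?_⟩
  have hn1 : (1:ℝ) ≤ α * n := by
    have h1 : (α⁻¹ : ℝ) ≤ n := by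
      calc (α⁻¹ : ℝ) ≤ ⌈α⁻¹⌉₊ := Nat.le_ceil _
        _ ≤ n := by exact_mod_cast le_trans (Nat.le_succ _) hn
    calc (1:ℝ) = α * α⁻¹ := (mul_inv_cancel₀ hα.ne').symm
      _ ≤ α * n := by nlinarith
  have f1 : (1:ℝ) ≤ α * n + β := by linarith
  have fpos : (0:ℝ) < α * n + β := by linarith
  have fpos' : (0:ℝ) < α * (n + 1) + β := by nlinarith
  set m : ℤ := Int.log b (α * n + β) with hm
  have hm0 : 0 ≤ m := by
    have := (Int.zpow_le_iff_le_log hb1 fpos (x := 0)).mp (by rw [zpow_zero]; exact f1)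
    simpa using this
  -- f n < b ^ (m+1)
  have hub : α * n + β < (b:ℝ) ^ (m + 1) := Int.lt_zpow_succ_log_self hb1 _
  have hlb : (b:ℝ) ^ m ≤ α * n + β := Int.zpow_log_le_self hb1 fpos
  have hbm1 : (b:ℝ) ≤ (b:ℝ) ^ (m + 1) := by
    calc (b:ℝ) = (b:ℝ) ^ (1:ℤ) := (zpow_one _).symm
      _ ≤ (b:ℝ) ^ (m + 1) := zpow_le_zpow_right₀ hbR.le (by omega)
  -- f (n+1) < b ^ (m+2)
  have hub2 : α * (n + 1) + β < (b:ℝ) ^ (m + 2) := by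
    have h2 : (2:ℝ) * (b:ℝ) ^ (m+1) ≤ (b:ℝ) ^ (m + 2) := by
      have hbne : (b:ℝ) ≠ 0 := by positivity
      have : (b:ℝ) ^ (m + 2) = (b:ℝ) ^ (m+1) * (b:ℝ) := by
        rw [show m + 2 = (m + 1) + 1 from by ring, zpow_add_one₀ hbne]
      rw [this]
      have hpos : (0:ℝ) < (b:ℝ) ^ (m+1) := by positivity
      have : (2:ℝ) ≤ b := by exact_mod_cast hb
      nlinarith
    have : α * (n + 1) + β = (α * n + β) + α := by ring
    nlinarith
  have hlog2 : Int.log b (α * (n + 1) + β) < m + 2 :=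
    (Int.lt_zpow_iff_log_lt hb1 fpos').mp hub2
  have hlogmono : m ≤ Int.log b (α * (n + 1) + β) :=
    Int.log_mono_right fpos (by nlinarith)
  rw [Real.floor_logb_natCast fpos'.le, Real.floor_logb_natCast fpos.le, ← hm]
  constructor
  · intro h
    have hlg : Int.log b (α * (n + 1) + β) = m + 1 := by omega
    refine ⟨(m + 1).toNat, by omega, ?_⟩
    have hcast : ((b:ℝ) ^ (m+1).toNat) = (b:ℝ) ^ (m + 1) := by
      rw [← zpow_natCast]; congr 1; omega
    have hk1 : (b:ℝ) ^ (m + 1) ≤ α * (n + 1) + β := by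
      have := Int.zpow_log_le_self hb1 fpos'
      rwa [hlg] at this
    have hx1 : (n:ℝ) < ((b:ℝ) ^ (m+1).toNat - β) / α := by
      rw [lt_div_iff₀ hα, hcast]; nlinarith
    have hx2 : ((b:ℝ) ^ (m+1).toNat - β) / α < (n:ℝ) + 1 := by
      rcases lt_or_eq_of_le (div_le_iff₀ hα |>.mpr (by rw [hcast]; nlinarith) :
          ((b:ℝ) ^ (m+1).toNat - β) / α ≤ (n:ℝ) + 1) with h' | h'
      · exact h'
      · exact absurd (by exact_mod_cast h' : ((b:ℝ) ^ (m+1).toNat - β) / α = ((n:ℤ)+1 : ℤ))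
          (hnotint _ (by omega) _)
    symm
    rw [Int.floor_eq_iff]
    constructor <;> [exact_mod_cast hx1.le; exact_mod_cast hx2]
  · rintro ⟨k, hk, hkn⟩
    set x : ℝ := ((b:ℝ) ^ k - β) / α with hx
    have hne : x ≠ ((n:ℤ) : ℝ) := hnotint k hk _
    have hx1 : (n:ℝ) < x := by
      have := Int.floor_le x
      rw [← hkn] at this
      push_cast at this ⊢
      cases lt_or_eq_of_le this with
      | inl h' => linarith
      | inr h' => exact absurd h'.symm (by exact_mod_cast hne)
    have hx2 : x < (n:ℝ) + 1 := by
      have := Int.lt_floor_add_one x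
      rw [← hkn] at this; exact_mod_cast this
    have hbk1 : α * n + β < (b:ℝ) ^ k := by
      rw [hx, lt_div_iff₀ hα] at hx1; nlinarith
    have hbk2 : (b:ℝ) ^ k < α * (n + 1) + β := by
      rw [hx, div_lt_iff₀ hα] at hx2; nlinarith
    have hcast : ((b:ℝ) ^ k) = (b:ℝ) ^ (k:ℤ) := by rw [zpow_natCast]
    have h1 : (k:ℤ) ≤ Int.log b (α * (n + 1) + β) :=
      (Int.zpow_le_iff_le_log hb1 fpos' (x := (k:ℤ))).mp (by rw [← hcast]; exact hbk2.le)
    have h2 : m < (k:ℤ) :=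
      (Int.lt_zpow_iff_log_lt hb1 fpos (x := (k:ℤ))).mp (by rw [← hcast]; exact hbk1)
    omega
end

section
/- Let α, β be real numbers with 0 < β < α < b and b ≥ 2 an integer. Define c_k = ⌊(b^k − β)/α⌋ for k ≥ 1 and r_k = ⌊b·{(b^k − β)/α} + (b−1)·{β/α}⌋, where {x} denotes the fractional part. Then c_{k+1} = b·c_k + r_k for all k ≥ 1. -/
theorem stmt_3 (α β : ℝ) (b : ℕ) (hb : 2 ≤ b) (hβ : 0 < β) (hβα : β < α) (hαb : α < b)
    (c r : ℕ → ℤ)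
    (hc : ∀ k, c k = ⌊((b : ℝ) ^ k - β) / α⌋)
    (hr : ∀ k, r k = ⌊b * Int.fract (((b : ℝ) ^ k - β) / α) + (b - 1) * Int.fract (β / α)⌋) :
    ∀ k : ℕ, 1 ≤ k → c (k + 1) = b * c k + r k := by
  intro k _
  have hα : 0 < α := hβ.trans hβα
  set x : ℝ := ((b : ℝ) ^ k - β) / α with hx
  have hfr : Int.fract (β / α) = β / α :=
    Int.fract_eq_self.mpr ⟨le_of_lt (div_pos hβ hα), (div_lt_one hα).mpr hβα⟩
  have key : ((b : ℝ) ^ (k + 1) - β) / α = (↑(b * ⌊x⌋) : ℤ) +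
      ((b : ℝ) * Int.fract x + ((b : ℝ) - 1) * (β / α)) := by
    have hfx : Int.fract x = x - ⌊x⌋ := by rw [Int.fract]
    push_cast
    rw [hfx, hx]
    field_simp
    ring
  rw [hc, hc, hr, key, Int.floor_intCast_add, hfr]
end

section
/- Let α = p/q be rational with p, q positive coprime integers, β real with 0 < β < α < b, and b ≥ 2 an integer. Define r_k = ⌊b·{(b^k − β)/α} + (b−1)·{β/α}⌋. If b^i ≡ b^j (mod p) for positive integers i, j, then r_i = r_j. Consequently, the sequence {r_k}_{k≥1} is ultimately periodic. -/
theorem stmt_5 (p q : ℕ) (hp : 0 < p) (hq : 0 < q) (hpq : Nat.Coprime p q)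
    (α β : ℝ) (b : ℕ) (hb : 2 ≤ b) (hα : α = (p : ℝ) / q)
    (hβ : 0 < β) (hβα : β < α) (hαb : α < b)
    (r : ℕ → ℤ)
    (hr : ∀ k, r k = ⌊b * Int.fract (((b : ℝ) ^ k - β) / α) + (b - 1) * Int.fract (β / α)⌋) :
    (∀ i j : ℕ, 1 ≤ i → 1 ≤ j → b ^ i ≡ b ^ j [MOD p] → r i = r j) ∧
      ∃ N P : ℕ, 1 ≤ P ∧ ∀ k ≥ N, r (k + P) = r k := by
  have hp' : (0:ℝ) < p := by exact_mod_cast hp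
  have hq' : (0:ℝ) < q := by exact_mod_cast hq
  have key : ∀ i j : ℕ, b ^ i ≡ b ^ j [MOD p] → r i = r j := by
    intro i j h
    rw [hr i, hr j]
    have hfr : Int.fract (((b : ℝ) ^ i - β) / α) = Int.fract (((b : ℝ) ^ j - β) / α) := by
      rw [Int.fract_eq_fract]
      obtain ⟨c, hc⟩ := (Nat.modEq_iff_dvd.mp h)
      push_cast at hc
      have hceq : ((b:ℝ))^j - (b:ℝ)^i = p * c := by exact_mod_cast hc
      refine ⟨-(c * q), ?_⟩
      rw [hα]
      push_cast
      field_simp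
      linear_combination (-1:ℝ) * hceq
    rw [hfr]
  have hfin : ∃ i j : ℕ, 1 ≤ i ∧ i < j ∧ b ^ i ≡ b ^ j [MOD p] := by
    obtain ⟨a, a', hne, heq⟩ := Finite.exists_ne_map_eq_of_infinite
      (f := fun k : ℕ => (⟨b ^ (k+1) % p, Nat.mod_lt _ hp⟩ : Fin p))
    have h' : b ^ (a+1) ≡ b ^ (a'+1) [MOD p] := by
      simpa [Nat.ModEq] using congrArg Fin.val heq
    rcases lt_or_gt_of_ne hne with h | h
    · exact ⟨a+1, a'+1, by omega, by omega, h'⟩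
    · exact ⟨a'+1, a+1, by omega, by omega, h'.symm⟩
  obtain ⟨i, j, hi, hij, hmod⟩ := hfin
  refine ⟨fun i j _ _ h => key i j h, i, j - i, by omega, fun k hk => ?_⟩
  have h2 : b ^ ((k-i)+j) ≡ b ^ ((k-i)+i) [MOD p] := by
    rw [pow_add, pow_add]; exact (hmod.symm).mul_left _
  have e1 : (k-i)+j = k + (j - i) := by omega
  have e2 : (k-i)+i = k := by omega
  rw [e1, e2] at h2
  exact key _ _ h2
end

section
/- Let α, β ∈ ℝ with 0 < β < α < b, b ≥ 2 an integer, with α irrational. Write 1/α = ⌊1/α⌋ + Σ_{i≥1} α_i/b^i (the base-b digit expansion of the fractional part of 1/α, with digits α_i ∈ {0,…,b−1}), and β/α = Σ_{i≥1} β_i/b^i. For k ≥ 0 let P_k denote the statement Σ_{i≥1} α_{k+i}/b^i ≥ Σ_{i≥1} β_i/b^i. Define r_k = ⌊b·{(b^k−β)/α} + (b−1)·{β/α}⌋. Then for k ≥ 1: r_k = α_{k+1} if P_k and P_{k+1} both hold; r_k = α_{k+1} − 1 if P_k holds and P_{k+1} fails; r_k = b + α_{k+1} if P_k fails and P_{k+1}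 holds; r_k = b + α_{k+1} − 1 if both P_k and P_{k+1} fail. -/
noncomputable def tailSum (b : ℕ) (A : ℕ → ℕ) (m : ℕ) : ℝ :=
  ∑' i : ℕ, (A (m + i + 1) : ℝ) / b ^ (i + 1)

lemma term_eq (b : ℕ) (A : ℕ → ℕ) (m i : ℕ) :
    (A (m + i + 1) : ℝ) / b ^ (i + 1) = (A (m + i + 1) : ℝ) * ((b:ℝ)⁻¹) ^ (i+1) := by
  rw [div_eq_mul_inv, inv_pow]

section Aux

variable {b : ℕ} (hb : 2 ≤ b) {A : ℕ → ℕ} (hA : ∀ i, A i < b)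

include hb in
lemma hb1 : (1:ℝ) < b := by exact_mod_cast Nat.lt_of_lt_of_le one_lt_two hb

include hb in
lemma hc0 : 0 < ((b:ℝ))⁻¹ := by
  have := hb1 hb; positivity

include hb in
lemma hc1 : ((b:ℝ))⁻¹ < 1 := by
  rw [inv_lt_one_iff₀]; right; exact hb1 hb

include hb hA in
lemma summable_tail (m : ℕ) :
    Summable (fun i : ℕ => (A (m + i + 1) : ℝ) / b ^ (i + 1)) := by
  have h1 := hb1 hb
  have h0 : (0:ℝ) < b := lt_trans one_pos h1
  refine Summable.of_nonneg_of_le (f := fun i : ℕ => ((b:ℝ))⁻¹ ^ i)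
    (fun i => by positivity) ?_ ?_
  · intro i
    rw [term_eq, pow_succ]
    have hAle : (A (m + i + 1) : ℝ) ≤ b := by exact_mod_cast (hA _).le
    calc (A (m + i + 1) : ℝ) * ((b:ℝ)⁻¹ ^ i * (b:ℝ)⁻¹)
        ≤ (b:ℝ) * ((b:ℝ)⁻¹ ^ i * (b:ℝ)⁻¹) := by
          apply mul_le_mul_of_nonneg_right hAle; positivity
      _ = (b:ℝ)⁻¹ ^ i := by field_simp
  · exact summable_geometric_of_lt_one (hc0 hb).le (hc1 hb)

include hb hA in
lemma tail_nonneg (m : ℕ) : 0 ≤ tailSum b A m :=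
  tsum_nonneg fun i => by positivity

include hb hA in
lemma tail_le_one (m : ℕ) : tailSum b A m ≤ 1 := by
  have h1 := hb1 hb
  have h0 : (0:ℝ) < b := lt_trans one_pos h1
  set c : ℝ := (b:ℝ)⁻¹ with hc
  have hgs : Summable (fun i : ℕ => (((b:ℝ)-1) * c) * c ^ i) :=
    (summable_geometric_of_lt_one (hc0 hb).le (hc1 hb)).mul_left _
  have h2 : tailSum b A m ≤ ∑' i : ℕ, (((b:ℝ)-1) * c) * c ^ i := by
    apply Summable.tsum_le_tsum _ (summable_tail hb hA m) hgs
    intro i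
    rw [term_eq, pow_succ]
    have hAle : (A (m + i + 1) : ℝ) ≤ (b:ℝ) - 1 := by
      have := hA (m + i + 1)
      have : A (m + i + 1) + 1 ≤ b := this
      have : ((A (m + i + 1) : ℝ)) + 1 ≤ b := by exact_mod_cast this
      linarith
    calc (A (m + i + 1) : ℝ) * (c ^ i * c)
        ≤ ((b:ℝ) - 1) * (c ^ i * c) := by
          apply mul_le_mul_of_nonneg_right hAle
          have := hc0 hb; positivity
      _ = (((b:ℝ)-1) * c) * c ^ i := by ring
  have h3 : ∑' i : ℕ, (((b:ℝ)-1) * c) * c ^ i = 1 := by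
    rw [tsum_mul_left, tsum_geometric_of_lt_one (hc0 hb).le (hc1 hb)]
    have hbne : (b:ℝ) - 1 ≠ 0 := by linarith
    have h1c : 1 - c = ((b:ℝ)-1) * c := by
      have hbc : (b:ℝ) * c = 1 := by rw [hc]; exact mul_inv_cancel₀ h0.ne'
      linear_combination (-1 : ℝ) * hbc
    rw [h1c, mul_inv_cancel₀ (by positivity)]
  linarith

include hb hA in
lemma tail_split (m : ℕ) :
    (b:ℝ) * tailSum b A m = A (m + 1) + tailSum b A (m + 1) := by
  have h1 := hb1 hb
  have h0 : (0:ℝ) < b := lt_trans one_pos h1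
  have hs := summable_tail hb hA m
  have hz := Summable.tsum_eq_zero_add hs
  unfold tailSum
  rw [hz]
  have hre : ∀ i : ℕ, (A (m + (i+1) + 1) : ℝ) / b ^ ((i+1) + 1)
      = ((A (m + 1 + i + 1) : ℝ) / b ^ (i + 1)) * (b:ℝ)⁻¹ := by
    intro i
    have : m + (i+1) + 1 = m + 1 + i + 1 := by ring
    rw [this, pow_succ, div_mul_eq_div_div, div_eq_mul_inv ((A (m+1+i+1) : ℝ) / _)]
  calc (b:ℝ) * ((A (m + 0 + 1) : ℝ) / b ^ (0+1) + ∑' i : ℕ, (A (m + (i+1) + 1) : ℝ) / b ^ ((i+1) + 1))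
      = (b:ℝ) * ((A (m + 1) : ℝ) / b + (∑' i : ℕ, ((A (m + 1 + i + 1) : ℝ) / b ^ (i + 1)) * (b:ℝ)⁻¹)) := by
        congr 1
        congr 1
        · norm_num
        · exact tsum_congr hre
    _ = (A (m + 1) : ℝ) + tailSum b A (m + 1) := by
        rw [tsum_mul_right]
        unfold tailSum
        field_simp

end Aux

section Main

variable {α : ℝ} {b : ℕ} (hb : 2 ≤ b) {A : ℕ → ℕ} (hA : ∀ i, A i < b)

include hb hA in
lemma fract_pow_div (hirr : Irrational α)
    (hAexp : Int.fract (1 / α) = tailSum b A 0) :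
    ∀ m : ℕ, Int.fract ((b:ℝ) ^ m / α) = tailSum b A m := by
  intro m
  induction m with
  | zero => simpa using hAexp
  | succ m ih =>
    have h1 := hb1 hb
    have h0 : (0:ℝ) < b := lt_trans one_pos h1
    have hirr' : Irrational ((b:ℝ) ^ (m+1) / α) := by
      have : Irrational (((b ^ (m+1) : ℕ) : ℝ) / α) :=
        hirr.natCast_div (Nat.pos_of_ne_zero (pow_ne_zero _ (by omega))).ne'
      rwa [Nat.cast_pow] at this
    have hx : (b:ℝ) ^ (m+1) / α
        = (((b : ℤ) * ⌊(b:ℝ)^m/α⌋ + A (m+1) : ℤ) : ℝ) + tailSum b A (m+1) := by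
      have hfloor : (b:ℝ)^m/α = (⌊(b:ℝ)^m/α⌋ : ℝ) + tailSum b A m := by
        rw [← ih, Int.floor_add_fract]
      have e1 : (b:ℝ)^(m+1)/α = (b:ℝ) * ((b:ℝ)^m/α) := by
        rw [pow_succ]; ring
      have hf2 : (b:ℝ) * ((b:ℝ)^m/α)
          = (b:ℝ) * (⌊(b:ℝ)^m/α⌋:ℝ) + (b:ℝ) * tailSum b A m := by
        calc (b:ℝ) * ((b:ℝ)^m/α)
            = (b:ℝ) * ((⌊(b:ℝ)^m/α⌋:ℝ) + tailSum b A m) := by rw [← hfloor]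
          _ = _ := by ring
      have hsplit := tail_split hb hA m
      push_cast
      linarith [e1, hf2, hsplit]
    have hfr : Int.fract ((b:ℝ) ^ (m+1) / α) = Int.fract (tailSum b A (m+1)) := by
      rw [hx, Int.fract_intCast_add]
    rcases lt_or_eq_of_le (tail_le_one hb hA (m+1)) with hlt | heq
    · rw [hfr, Int.fract_eq_self.mpr ⟨tail_nonneg hb hA (m+1), hlt⟩]
    · exfalso
      have : Int.fract ((b:ℝ) ^ (m+1) / α) = 0 := by
        rw [hfr, heq]; simp [Int.fract_one]
      have hfi : Irrational (Int.fract ((b:ℝ) ^ (m+1) / α)) := by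
        rw [← Int.self_sub_floor]
        exact hirr'.sub_intCast _
      exact (hfi.ne_int 0) (by rw [this]; simp)

end Main

theorem stmt_6 (α β : ℝ) (b : ℕ) (hb : 2 ≤ b) (hirr : Irrational α)
    (hβ : 0 < β) (hβα : β < α) (hαb : α < b)
    (A B : ℕ → ℕ) (hA : ∀ i, A i < b) (hB : ∀ i, B i < b)
    (hAexp : Int.fract (1 / α) = ∑' i : ℕ, (A (i + 1) : ℝ) / b ^ (i + 1))
    (hBexp : β / α = ∑' i : ℕ, (B (i + 1) : ℝ) / b ^ (i + 1))
    (P : ℕ → Prop)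
    (hP : ∀ k, P k ↔ (∑' i : ℕ, (B (i + 1) : ℝ) / b ^ (i + 1)) ≤
      ∑' i : ℕ, (A (k + i + 1) : ℝ) / b ^ (i + 1))
    (r : ℕ → ℤ)
    (hr : ∀ k, r k = ⌊b * Int.fract (((b : ℝ) ^ k - β) / α) + (b - 1) * Int.fract (β / α)⌋) :
    ∀ k : ℕ, 1 ≤ k →
      (P k → P (k + 1) → r k = A (k + 1)) ∧
      (P k → ¬P (k + 1) → r k = (A (k + 1) : ℤ) - 1) ∧
      (¬P k → P (k + 1) → r k = b + A (k + 1)) ∧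
      (¬P k → ¬P (k + 1) → r k = (b : ℤ) + A (k + 1) - 1) := by
  intro k _
  have hα0 : 0 < α := hβ.trans hβα
  have h1 := hb1 hb
  have h0 : (0:ℝ) < b := lt_trans one_pos h1
  have hAexp' : Int.fract (1 / α) = tailSum b A 0 := by
    rw [hAexp]; exact tsum_congr (fun i => by norm_num)
  have hT := fract_pow_div hb hA hirr hAexp'
  set s := β / α with hsdef
  have hs0 : 0 < s := div_pos hβ hα0
  have hs1 : s < 1 := (div_lt_one hα0).mpr hβα
  have hfs : Int.fract s = s := Int.fract_eq_self.mpr ⟨hs0.le, hs1⟩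
  set Tk := tailSum b A k with hTkdef
  set Tk1 := tailSum b A (k+1) with hTk1def
  have hTk := hT k
  have hTk1 := hT (k+1)
  have hTk0 : 0 ≤ Tk := tail_nonneg hb hA k
  have hTkl : Tk < 1 := by rw [hTkdef, ← hTk]; exact Int.fract_lt_one _
  have hT10 : 0 ≤ Tk1 := tail_nonneg hb hA (k+1)
  have hT1l : Tk1 < 1 := by rw [hTk1def, ← hTk1]; exact Int.fract_lt_one _
  have hsplit : (b:ℝ) * Tk = A (k+1) + Tk1 := tail_split hb hA k
  have hPk : P k ↔ s ≤ Tk := by rw [hP k, ← hBexp]; exact Iff.rfl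
  have hPk1 : P (k+1) ↔ s ≤ Tk1 := by rw [hP (k+1), ← hBexp]; exact Iff.rfl
  have hfloor : (b:ℝ)^k/α = (⌊(b:ℝ)^k/α⌋ : ℝ) + Tk := by
    conv_lhs => rw [← Int.floor_add_fract ((b:ℝ)^k/α)]
    rw [hTk]
  have hxval : ((b:ℝ)^k - β)/α = (b:ℝ)^k/α - s := by
    rw [sub_div, hsdef]
  have F1 : s ≤ Tk → r k = A (k+1) + ⌊Tk1 - s⌋ := by
    intro h
    have hF : Int.fract (((b:ℝ)^k - β)/α) = Tk - s := by
      have e : ((b:ℝ)^k - β)/α = (⌊(b:ℝ)^k/α⌋ : ℝ) + (Tk - s) := by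
        rw [hxval]; nth_rewrite 1 [hfloor]; ring
      rw [e, Int.fract_intCast_add, Int.fract_eq_self.mpr ⟨by linarith, by linarith⟩]
    have hval : (b:ℝ) * Int.fract (((b:ℝ)^k - β)/α) + ((b:ℝ)-1) * Int.fract s
        = ((A (k+1) : ℤ) : ℝ) + (Tk1 - s) := by
      rw [hfs, hF]; push_cast; linarith [hsplit]
    rw [hr k, hval, Int.floor_intCast_add]
  have F2 : Tk < s → r k = b + A (k+1) + ⌊Tk1 - s⌋ := by
    intro h
    have hF : Int.fract (((b:ℝ)^k - β)/α) = Tk - s + 1 := by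
      have e : ((b:ℝ)^k - β)/α = ((⌊(b:ℝ)^k/α⌋ - 1 : ℤ) : ℝ) + (Tk - s + 1) := by
        rw [hxval]; nth_rewrite 1 [hfloor]; push_cast; ring
      rw [e, Int.fract_intCast_add, Int.fract_eq_self.mpr ⟨by linarith, by linarith⟩]
    have hval : (b:ℝ) * Int.fract (((b:ℝ)^k - β)/α) + ((b:ℝ)-1) * Int.fract s
        = (((b : ℤ) + A (k+1) : ℤ) : ℝ) + (Tk1 - s) := by
      rw [hfs, hF]; push_cast; linarith [hsplit]
    rw [hr k, hval, Int.floor_intCast_add]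
  have G1 : s ≤ Tk1 → ⌊Tk1 - s⌋ = 0 := by
    intro h
    exact Int.floor_eq_zero_iff.mpr ⟨by linarith, by linarith⟩
  have G2 : Tk1 < s → ⌊Tk1 - s⌋ = -1 := by
    intro h
    exact Int.floor_eq_iff.mpr ⟨by push_cast; linarith, by push_cast; linarith⟩
  refine ⟨fun h1 h2 => ?_, fun h1 h2 => ?_, fun h1 h2 => ?_, fun h1 h2 => ?_⟩
  · rw [F1 (hPk.mp h1), G1 (hPk1.mp h2)]; ring
  · rw [F1 (hPk.mp h1), G2 (not_le.mp (fun hc => h2 (hPk1.mpr hc)))]; ring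
  · rw [F2 (not_le.mp (fun hc => h1 (hPk.mpr hc))), G1 (hPk1.mp h2)]; ring
  · rw [F2 (not_le.mp (fun hc => h1 (hPk.mpr hc))),
        G2 (not_le.mp (fun hc => h2 (hPk1.mpr hc)))]; ring
end

section
/- With the setup of digit expansions of 1/α and β/α in base b and r_k as defined: r_k ∈ {α_{k+1}, b + α_{k+1}} if and only if r_{k+1} ∈ {α_{k+2}, α_{k+2} − 1}; and r_k ∈ {α_{k+1} − 1, b + α_{k+1} − 1} if and only if r_{k+1} ∈ {b + α_{k+2}, b + α_{k+2} − 1}. -/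
lemma aux_summable (b : ℕ) (hb : 2 ≤ b) (A : ℕ → ℕ) (hA : ∀ i, A i < b) (k : ℕ) :
    Summable (fun i : ℕ => (A (k + i + 1) : ℝ) / b ^ (i + 1)) := by
  have hb1 : (1 : ℝ) < b := by exact_mod_cast lt_of_lt_of_le one_lt_two hb
  have hb0 : (0 : ℝ) < b := by linarith
  refine Summable.of_nonneg_of_le (fun i => by positivity) (fun i => ?_)
    (summable_geometric_of_lt_one (by positivity) (inv_lt_one_of_one_lt₀ hb1))
  rw [div_le_iff₀ (by positivity)]
  have h2 : ((b : ℝ)⁻¹) ^ i * (b : ℝ) ^ (i + 1) = b := by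
    rw [pow_succ, inv_pow]
    field_simp
  rw [h2]
  exact_mod_cast (hA (k + i + 1)).le

lemma aux_le_one (b : ℕ) (hb : 2 ≤ b) (A : ℕ → ℕ) (hA : ∀ i, A i < b) (k : ℕ) :
    (∑' i : ℕ, (A (k + i + 1) : ℝ) / b ^ (i + 1)) ≤ 1 := by
  have hb1 : (1 : ℝ) < b := by exact_mod_cast lt_of_lt_of_le one_lt_two hb
  have hb0 : (0 : ℝ) < b := by linarith
  have hg : Summable (fun i : ℕ => ((b : ℝ) - 1) * ((b : ℝ)⁻¹) ^ (i + 1)) :=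
    (((summable_geometric_of_lt_one (by positivity) (inv_lt_one_of_one_lt₀ hb1)).mul_left
      (b : ℝ)⁻¹).mul_left ((b : ℝ) - 1)).congr (fun i => by ring)
  have h1 : (∑' i : ℕ, (A (k + i + 1) : ℝ) / b ^ (i + 1))
      ≤ ∑' i : ℕ, ((b : ℝ) - 1) * ((b : ℝ)⁻¹) ^ (i + 1) := by
    refine Summable.tsum_le_tsum (fun i => ?_) (aux_summable b hb A hA k) hg
    rw [div_eq_mul_inv, ← inv_pow]
    apply mul_le_mul_of_nonneg_right _ (by positivity)
    have := hA (k + i + 1)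
    have : (A (k + i + 1) : ℝ) ≤ (b : ℝ) - 1 := by
      have : (A (k + i + 1) : ℝ) + 1 ≤ (b : ℝ) := by exact_mod_cast hA (k + i + 1)
      linarith
    exact this
  refine h1.trans (le_of_eq ?_)
  have h2 : ∑' i : ℕ, ((b : ℝ) - 1) * ((b : ℝ)⁻¹) ^ (i + 1)
      = ((b : ℝ) - 1) * ((b : ℝ)⁻¹ * (1 - (b : ℝ)⁻¹)⁻¹) := by
    rw [tsum_mul_left]
    congr 1
    have : (fun i : ℕ => ((b : ℝ)⁻¹) ^ (i + 1)) = fun i : ℕ => (b : ℝ)⁻¹ * ((b : ℝ)⁻¹) ^ i := by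
      funext i; rw [pow_succ]; ring
    rw [this, tsum_mul_left, tsum_geometric_of_lt_one (by positivity) (inv_lt_one_of_one_lt₀ hb1)]
  rw [h2]
  have hbne : (b : ℝ) ≠ 0 := ne_of_gt hb0
  have hbne1 : (b : ℝ) - 1 ≠ 0 := by intro h; nlinarith
  field_simp

lemma aux_key (α : ℝ) (b : ℕ) (hb : 2 ≤ b) (hirr : Irrational α) (hα : 0 < α)
    (A : ℕ → ℕ) (hA : ∀ i, A i < b)
    (hAexp : Int.fract (1 / α) = ∑' i : ℕ, (A (i + 1) : ℝ) / b ^ (i + 1)) :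
    ∀ k, (b : ℝ) * Int.fract ((b : ℝ) ^ k / α) = A (k + 1) + Int.fract ((b : ℝ) ^ (k + 1) / α) := by
  have hb1 : (1 : ℝ) < b := by exact_mod_cast lt_of_lt_of_le one_lt_two hb
  have hb0 : (0 : ℝ) < b := by linarith
  have hbne : (b : ℝ) ≠ 0 := ne_of_gt hb0
  set S : ℕ → ℝ := fun k => ∑' i : ℕ, (A (k + i + 1) : ℝ) / b ^ (i + 1) with hS
  -- recurrence for S
  have hrec : ∀ k, (b : ℝ) * S k = A (k + 1) + S (k + 1) := by
    intro k
    have h1 : (fun i : ℕ => (b : ℝ) * ((A (k + i + 1) : ℝ) / b ^ (i + 1)))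
        = fun i : ℕ => (A (k + i + 1) : ℝ) / b ^ i := by
      funext i
      rw [pow_succ]
      field_simp
    have hsum' : Summable (fun i : ℕ => (A (k + i + 1) : ℝ) / b ^ i) := by
      rw [← h1]; exact (aux_summable b hb A hA k).mul_left _
    calc (b : ℝ) * S k = ∑' i : ℕ, (b : ℝ) * ((A (k + i + 1) : ℝ) / b ^ (i + 1)) :=
          (tsum_mul_left).symm
      _ = ∑' i : ℕ, (A (k + i + 1) : ℝ) / b ^ i := by rw [h1]
      _ = (A (k + 0 + 1) : ℝ) / b ^ 0 + ∑' i : ℕ, (A (k + (i + 1) + 1) : ℝ) / b ^ (i + 1) :=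
          Summable.tsum_eq_zero_add hsum'
      _ = A (k + 1) + S (k + 1) := by
          have hidx : ∀ i : ℕ, k + (i + 1) + 1 = (k + 1) + i + 1 := fun i => by ring
          simp only [hidx, pow_zero, div_one, Nat.add_zero]
          rfl
  -- the expansion
  have hexp : ∀ k, Int.fract ((b : ℝ) ^ k / α) = S k := by
    intro k
    induction k with
    | zero =>
      have h0 : S 0 = ∑' i : ℕ, (A (i + 1) : ℝ) / b ^ (i + 1) := by simp [hS]
      rw [pow_zero, h0, ← hAexp]
    | succ k ih =>
      have hirr' : Irrational ((b : ℝ) ^ (k + 1) / α) := by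
        have h1 : Irrational α⁻¹ := hirr.inv
        have h2 : (((b : ℚ)) ^ (k + 1) : ℚ) ≠ 0 := by positivity
        have h3 := h1.ratCast_mul h2
        have heq : (((b : ℚ) ^ (k + 1) : ℚ) : ℝ) * α⁻¹ = (b : ℝ) ^ (k + 1) / α := by
          push_cast; ring
        rwa [heq] at h3
      -- fract (b^(k+1)/α) = fract (b * fract (b^k/α))
      have e1 : Int.fract ((b : ℝ) ^ (k + 1) / α)
          = Int.fract ((b : ℝ) * Int.fract ((b : ℝ) ^ k / α)) := by
        have e2 : (b : ℝ) ^ (k + 1) / α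
            = ((b * ⌊(b : ℝ) ^ k / α⌋ : ℤ) : ℝ) + (b : ℝ) * Int.fract ((b : ℝ) ^ k / α) := by
          have hx := Int.floor_add_fract ((b : ℝ) ^ k / α)
          push_cast
          linear_combination (-(b : ℝ)) * hx
        rw [e2, Int.fract_intCast_add]
      rw [e1, ih, hrec k]
      -- now fract (A(k+1) + S(k+1)) = S(k+1)
      have e3 : Int.fract ((A (k + 1) : ℝ) + S (k + 1)) = Int.fract (S (k + 1)) := by
        have : ((A (k + 1) : ℝ)) = ((A (k + 1) : ℤ) : ℝ) := by push_cast; ring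
        rw [this, Int.fract_intCast_add]
      rw [e3]
      have hS0 : 0 ≤ S (k + 1) := tsum_nonneg (fun i => by positivity)
      have hS1 : S (k + 1) ≤ 1 := aux_le_one b hb A hA (k + 1)
      rcases lt_or_eq_of_le hS1 with hlt | heq1
      · exact Int.fract_eq_self.2 ⟨hS0, hlt⟩
      · exfalso
        have hz : Int.fract ((b : ℝ) ^ (k + 1) / α) = 0 := by
          rw [e1, ih, hrec k, e3, heq1]
          simp
        have : ((b : ℝ) ^ (k + 1) / α) = ((⌊(b : ℝ) ^ (k + 1) / α⌋ : ℤ) : ℝ) := by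
          have := Int.floor_add_fract ((b : ℝ) ^ (k + 1) / α)
          rw [hz] at this
          linarith
        exact (Int.not_irrational _) (this ▸ hirr')
  intro k
  rw [hexp k, hexp (k + 1)]
  exact hrec k

theorem stmt_8 (α β : ℝ) (b : ℕ) (hb : 2 ≤ b) (hirr : Irrational α)
    (hβ : 0 < β) (hβα : β < α) (hαb : α < b)
    (A B : ℕ → ℕ) (hA : ∀ i, A i < b) (hB : ∀ i, B i < b)
    (hAexp : Int.fract (1 / α) = ∑' i : ℕ, (A (i + 1) : ℝ) / b ^ (i + 1))
    (hBexp : β / α = ∑' i : ℕ, (B (i + 1) : ℝ) / b ^ (i + 1))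
    (r : ℕ → ℤ)
    (hr : ∀ k, r k = ⌊b * Int.fract (((b : ℝ) ^ k - β) / α) + (b - 1) * Int.fract (β / α)⌋) :
    ∀ k : ℕ, 1 ≤ k →
      ((r k = (A (k + 1) : ℤ) ∨ r k = (b : ℤ) + A (k + 1)) ↔
        (r (k + 1) = (A (k + 2) : ℤ) ∨ r (k + 1) = (A (k + 2) : ℤ) - 1)) ∧
      ((r k = (A (k + 1) : ℤ) - 1 ∨ r k = (b : ℤ) + A (k + 1) - 1) ↔
        (r (k + 1) = (b : ℤ) + A (k + 2) ∨ r (k + 1) = (b : ℤ) + A (k + 2) - 1)) := by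
  have hα : 0 < α := hβ.trans hβα
  have hb1 : (1 : ℝ) < b := by exact_mod_cast lt_of_lt_of_le one_lt_two hb
  set y : ℝ := β / α with hy
  have hy0 : 0 < y := div_pos hβ hα
  have hy1 : y < 1 := (div_lt_one hα).2 hβα
  set T : ℕ → ℝ := fun k => Int.fract ((b : ℝ) ^ k / α) with hT
  have hkey : ∀ k, (b : ℝ) * T k = A (k + 1) + T (k + 1) :=
    aux_key α b hb hirr hα A hA hAexp
  have hT0 : ∀ k, 0 ≤ T k := fun k => Int.fract_nonneg _
  have hT1 : ∀ k, T k < 1 := fun k => Int.fract_lt_one _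
  have hfl : ∀ m : ℕ, ⌊T m - y⌋ = if y ≤ T m then 0 else -1 := by
    intro m
    by_cases h : y ≤ T m
    · rw [if_pos h, Int.floor_eq_iff]
      constructor
      · push_cast; linarith
      · push_cast; linarith [hT1 m]
    · rw [if_neg h, Int.floor_eq_iff]
      push_neg at h
      constructor
      · push_cast; linarith [hT0 m]
      · push_cast; linarith
  have hr' : ∀ k, r k = (A (k + 1) : ℤ) + b * (if y ≤ T k then 0 else 1)
      + (if y ≤ T (k + 1) then 0 else -1) := by
    intro k
    rw [hr k]
    have hfy : Int.fract (β / α) = y := Int.fract_eq_self.2 ⟨hy0.le, hy1⟩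
    have hfs : Int.fract (((b : ℝ) ^ k - β) / α) = Int.fract (T k - y) := by
      have e2 : ((b : ℝ) ^ k - β) / α = ((⌊(b : ℝ) ^ k / α⌋ : ℤ) : ℝ) + (T k - y) := by
        have hx := Int.floor_add_fract ((b : ℝ) ^ k / α)
        have : T k = Int.fract ((b : ℝ) ^ k / α) := rfl
        rw [this, hy]
        linear_combination -hx
      rw [e2, Int.fract_intCast_add]
    rw [hfy, hfs]
    by_cases hP : y ≤ T k
    · have hf2 : Int.fract (T k - y) = T k - y :=
        Int.fract_eq_self.2 ⟨by linarith, by linarith [hT1 k]⟩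
      have e3 : (b : ℝ) * (T k - y) + ((b : ℝ) - 1) * y
          = (((A (k + 1) : ℤ) + b * 0 : ℤ) : ℝ) + (T (k + 1) - y) := by
        push_cast
        linear_combination hkey k
      rw [hf2, e3, Int.floor_intCast_add, hfl (k + 1), if_pos hP]
    · have hflk : ⌊T k - y⌋ = -1 := by rw [hfl k, if_neg hP]
      have hf2 : Int.fract (T k - y) = T k - y + 1 := by
        have := Int.floor_add_fract (T k - y)
        rw [hflk] at this
        push_cast at this
        linarith
      have e3 : (b : ℝ) * (T k - y + 1) + ((b : ℝ) - 1) * y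
          = (((A (k + 1) : ℤ) + b * 1 : ℤ) : ℝ) + (T (k + 1) - y) := by
        push_cast
        linear_combination hkey k
      rw [hf2, e3, Int.floor_intCast_add, hfl (k + 1), if_neg hP]
  intro k _
  have e0 := hr' k
  have e1 := hr' (k + 1)
  have hb2 : (2 : ℤ) ≤ (b : ℤ) := by exact_mod_cast hb
  have hkk : k + 1 + 1 = k + 2 := rfl
  rw [hkk] at e1
  by_cases h1 : y ≤ T k <;> by_cases h2 : y ≤ T (k + 1) <;> by_cases h3 : y ≤ T (k + 2) <;>
    simp only [h1, h2, h3, if_true, if_false, if_pos, if_neg, not_false_iff] at e0 e1 <;>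
    constructor <;> omega
end

section
/- Let b ≥ 2, B ≥ 2 be integers and u a sequence over {0,…,B−1} with u_0 ≥ 1, and v_n = Σ_{i=0}^n u_i b^{n−i}. If v_N ≥ b^{K−1} and v_N ≤ b^K − 1 and v_{N+1} ≥ b^{K+1}, where K satisfies b^{K+1} − b + B ≤ b^{K+2} − C with C = ⌊(B−1)/(b−1)⌋ + 1, then for all i ≥ 1, b^{K+i} ≤ v_{N+i} ≤ b^{K+i+1} − C. -/
theorem stmt_11 (b B : ℕ) (hb : 2 ≤ b) (hB : 2 ≤ B)
    (u : ℕ → ℕ) (hu : ∀ i, u i < B) (hu0 : 1 ≤ u 0)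
    (v : ℕ → ℕ) (hv : ∀ n, v n = ∑ i ∈ Finset.range (n + 1), u i * b ^ (n - i))
    (C : ℕ) (hC : C = (B - 1) / (b - 1) + 1)
    (K N : ℕ) (hK : 1 ≤ K) (hKC : b ^ (K + 1) - b + B ≤ b ^ (K + 2) - C)
    (h1 : b ^ (K - 1) ≤ v N) (h2 : v N ≤ b ^ K - 1) (h3 : b ^ (K + 1) ≤ v (N + 1)) :
    ∀ i : ℕ, 1 ≤ i → b ^ (K + i) ≤ v (N + i) ∧ v (N + i) ≤ b ^ (K + i + 1) - C := by
  have hbpos : 0 < b := by omega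
  have hrec : ∀ n, v (n + 1) = b * v n + u (n + 1) := by
    intro n
    rw [hv, hv, Finset.sum_range_succ]
    simp only [Nat.sub_self, pow_zero, mul_one]
    congr 1
    rw [Finset.mul_sum]
    apply Finset.sum_congr rfl
    intro i hi
    simp only [Finset.mem_range] at hi
    have h : n + 1 - i = (n - i) + 1 := by omega
    rw [h, pow_succ]
    ring
  -- B ≤ C * (b - 1)
  have hBC : B ≤ C * (b - 1) := by
    obtain ⟨c, rfl⟩ : ∃ c, b = c + 1 := ⟨b - 1, by omega⟩
    obtain ⟨D, rfl⟩ : ∃ D, B = D + 1 := ⟨B - 1, by omega⟩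
    simp only [Nat.add_sub_cancel] at hC ⊢
    have hmod := Nat.div_add_mod D c
    have hlt : D % c < c := Nat.mod_lt _ (by omega)
    rw [hC]
    nlinarith [hmod, hlt]
  have hBCz : (B : ℤ) ≤ (C : ℤ) * ((b : ℤ) - 1) := by
    zify [show 1 ≤ b by omega] at hBC
    exact hBC
  have hble : b ≤ b ^ (K + 1) := by
    calc b = b ^ 1 := (pow_one b).symm
    _ ≤ b ^ (K + 1) := Nat.pow_le_pow_right hbpos (by omega)
  have hCle : C + 2 ≤ b ^ (K + 2) := by omega
  have hKCz : (b : ℤ) ^ (K + 1) - b + B ≤ (b : ℤ) ^ (K + 2) - C := by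
    zify [hble, show C ≤ b ^ (K + 2) by omega] at hKC
    exact hKC
  have h2z : (v N : ℤ) ≤ (b : ℤ) ^ K - 1 := by
    have h1K : 1 ≤ b ^ K := Nat.one_le_pow _ _ hbpos
    zify [h1K] at h2
    exact h2
  intro i hi
  obtain ⟨j, rfl⟩ : ∃ j, i = j + 1 := ⟨i - 1, by omega⟩
  induction j with
  | zero =>
    refine ⟨h3, ?_⟩
    show v (N + 1) ≤ b ^ (K + 2) - C
    have e : (v (N + 1) : ℤ) = b * v N + u (N + 1) := by exact_mod_cast hrec N
    have huz : (u (N + 1) : ℤ) ≤ (B : ℤ) - 1 := by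
      have := hu (N + 1); push_cast; omega
    zify [show C ≤ b ^ (K + 2) by omega]
    calc (v (N + 1) : ℤ) = b * v N + u (N + 1) := e
      _ ≤ (b : ℤ) * ((b : ℤ) ^ K - 1) + ((B : ℤ) - 1) := by
          have := mul_le_mul_of_nonneg_left h2z (show (0 : ℤ) ≤ b by positivity)
          linarith
      _ = (b : ℤ) ^ (K + 1) - b + B - 1 := by rw [pow_succ]; ring
      _ ≤ (b : ℤ) ^ (K + 2) - C := by linarith
  | succ k ih =>
    obtain ⟨ihl, ihu⟩ := ih (by omega)
    have hCk : C ≤ b ^ (K + (k + 1) + 1) := by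
      have : b ^ (K + 2) ≤ b ^ (K + (k + 1) + 1) := Nat.pow_le_pow_right hbpos (by omega)
      omega
    have hCk2 : C ≤ b ^ (K + (k + 1 + 1) + 1) := by
      have : b ^ (K + 2) ≤ b ^ (K + (k + 1 + 1) + 1) := Nat.pow_le_pow_right hbpos (by omega)
      omega
    have e : (v (N + (k + 1 + 1)) : ℤ) = b * v (N + (k + 1)) + u (N + (k + 1) + 1) := by
      have := hrec (N + (k + 1))
      have harg : N + (k + 1 + 1) = N + (k + 1) + 1 := by omega
      rw [harg]
      exact_mod_cast this
    constructor
    · have : b ^ (K + (k + 1 + 1)) ≤ b * v (N + (k + 1)) := by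
        calc b ^ (K + (k + 1 + 1)) = b * b ^ (K + (k + 1)) := by rw [← pow_succ']; ring_nf
          _ ≤ b * v (N + (k + 1)) := Nat.mul_le_mul_left _ ihl
      have e' : v (N + (k + 1 + 1)) = b * v (N + (k + 1)) + u (N + (k + 1) + 1) := by
        have harg : N + (k + 1 + 1) = N + (k + 1) + 1 := by omega
        rw [harg]; exact hrec _
      omega
    · zify [hCk2]
      have ihuz : (v (N + (k + 1)) : ℤ) ≤ (b : ℤ) ^ (K + (k + 1) + 1) - C := by
        zify [hCk] at ihu
        exact ihu
      have huz : (u (N + (k + 1) + 1) : ℤ) ≤ (B : ℤ) - 1 := by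
        have := hu (N + (k + 1) + 1); push_cast; omega
      calc (v (N + (k + 1 + 1)) : ℤ) = b * v (N + (k + 1)) + u (N + (k + 1) + 1) := e
        _ ≤ (b : ℤ) * ((b : ℤ) ^ (K + (k + 1) + 1) - C) + ((B : ℤ) - 1) := by
            have := mul_le_mul_of_nonneg_left ihuz (show (0 : ℤ) ≤ b by positivity)
            linarith
        _ ≤ (b : ℤ) ^ (K + (k + 1 + 1) + 1) - C := by
            have hp : (b : ℤ) ^ (K + (k + 1 + 1) + 1) = (b : ℤ) * (b : ℤ) ^ (K + (k + 1) + 1) := by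
              rw [← pow_succ']; ring_nf
            rw [hp]
            nlinarith [hBCz]
end

section
/- Let b ≥ 2 be an integer and suppose the increasing integer sequence {s_n} satisfies: the base-b digit string of v_{s_n} equals V₀V₁ⁿV₂ for fixed nonempty digit strings V₀, V₁, V₂ (for all n ≥ 0), where v_m = Σ_{i=0}^m u_i b^{m−i}. Then [u_{s_n+1} ⋯ u_{s_{n+1}}]_b = [V₁V₂]_b − b^{|V₁|}·[V₂]_b is constant for all sufficiently large n. -/
private lemma vstep (b : ℕ) (u v : ℕ → ℕ)
    (hv : ∀ m, v m = ∑ i ∈ Finset.range (m + 1), u i * b ^ (m - i)) (k : ℕ) :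
    v (k + 1) = b * v k + u (k + 1) := by
  rw [hv, hv, Finset.sum_range_succ, Finset.mul_sum]
  congr 1
  · apply Finset.sum_congr rfl
    intro i hi
    have hik : i ≤ k := Nat.lt_succ_iff.mp (Finset.mem_range.mp hi)
    have : k + 1 - i = (k - i) + 1 := by omega
    rw [this, pow_succ]
    ring
  · simp

private lemma vchunk (b : ℕ) (u v : ℕ → ℕ)
    (hv : ∀ m, v m = ∑ i ∈ Finset.range (m + 1), u i * b ^ (m - i)) (p m : ℕ) :
    v (m + p) = b ^ p * v m + ∑ i ∈ Finset.range p, u (m + 1 + i) * b ^ (p - 1 - i) := by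
  induction p with
  | zero => simp
  | succ p ih =>
    have h1 : v (m + (p + 1)) = b * v (m + p) + u (m + p + 1) := vstep b u v hv (m + p)
    have hlast : p + 1 - 1 - p = 0 := by omega
    have hsum : ∑ i ∈ Finset.range p, u (m + 1 + i) * b ^ (p + 1 - 1 - i)
        = b * ∑ i ∈ Finset.range p, u (m + 1 + i) * b ^ (p - 1 - i) := by
      rw [Finset.mul_sum]
      apply Finset.sum_congr rfl
      intro i hi
      have : p + 1 - 1 - i = (p - 1 - i) + 1 := by
        have := Finset.mem_range.mp hi; omega
      rw [this, pow_succ]; ring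
    have h2 : m + p + 1 = m + 1 + p := by omega
    rw [h1, ih, Finset.sum_range_succ, hlast, hsum, h2, pow_succ]
    ring

theorem stmt_12 (b : ℕ) (hb : 2 ≤ b)
    (u : ℕ → ℕ) (v : ℕ → ℕ)
    (hv : ∀ m, v m = ∑ i ∈ Finset.range (m + 1), u i * b ^ (m - i))
    (V₀ V₁ V₂ : List ℕ)
    (hV₀ : V₀ ≠ []) (hV₁ : V₁ ≠ []) (hV₂ : V₂ ≠ [])
    (hd₀ : ∀ d ∈ V₀, d < b) (hd₁ : ∀ d ∈ V₁, d < b) (hd₂ : ∀ d ∈ V₂, d < b)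
    (p : ℕ) (hp : p = V₁.length)
    (s : ℕ → ℕ) (hs : StrictMono s)
    (hstep : ∃ M : ℕ, ∀ n ≥ M, s (n + 1) = s n + p)
    (hword : ∀ n : ℕ,
      v (s n) = Nat.ofDigits b (V₀ ++ (List.replicate n V₁).flatten ++ V₂).reverse) :
    ∃ N : ℕ, ∀ n ≥ N,
      ((∑ i ∈ Finset.range p, u (s n + 1 + i) * b ^ (p - 1 - i) : ℕ) : ℤ) =
        (Nat.ofDigits b (V₁ ++ V₂).reverse : ℤ) -
          (b : ℤ) ^ V₁.length * (Nat.ofDigits b V₂.reverse : ℤ) := by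
  obtain ⟨M, hM⟩ := hstep
  refine ⟨M, fun n hn => ?_⟩
  have hchunk := vchunk b u v hv p (s n)
  rw [← hM n hn] at hchunk
  have hZ : ((∑ i ∈ Finset.range p, u (s n + 1 + i) * b ^ (p - 1 - i) : ℕ) : ℤ)
      = (v (s (n + 1)) : ℤ) - (b : ℤ) ^ p * (v (s n) : ℤ) := by
    rw [hchunk]; push_cast; ring
  have hrep : (List.replicate (n + 1) V₁).flatten
      = (List.replicate n V₁).flatten ++ V₁ := by
    rw [List.replicate_succ']
    simp
  have e2 : Nat.ofDigits b (V₁ ++ V₂).reverse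
      = Nat.ofDigits b V₂.reverse + b ^ V₂.length * Nat.ofDigits b V₁.reverse := by
    rw [List.reverse_append, Nat.ofDigits_append, List.length_reverse]
  simp only [← Nat.coe_ofDigits ℤ]
  rw [hZ, hword n, hword (n + 1), hrep, e2]
  simp only [List.reverse_append, Nat.ofDigits_append, List.length_reverse,
    List.length_append]
  rw [hp]
  push_cast
  ring
end

section
/- Let b ≥ 2 and B be integers with 2 ≤ B, and let u = {u_i}_{i≥0} be a sequence over {0,…,B−1} with u_0 ≥ 1. If u is ultimately periodic, then the language L_b(u) = { (Σ_{i=0}^n u_i b^{n−i})_b : n ≥ 0 } ⊆ {0,…,b−1}* (base-b digit strings) is a regular language. -/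
open List

namespace Stmt13

def Deriv (L : Set (List ℕ)) (x : List ℕ) : Set (List ℕ) := {y | x ++ y ∈ L}

theorem Deriv_append (L : Set (List ℕ)) (x y : List ℕ) :
    Deriv L (x ++ y) = Deriv (Deriv L x) y := by
  ext t; simp [Deriv, List.append_assoc]

theorem Deriv_nil (L : Set (List ℕ)) : Deriv L [] = L := by
  ext t; simp [Deriv]

theorem regular_of_finite_deriv (L : Language ℕ)
    (h : (Set.range (Deriv L)).Finite) : L.IsRegular := by
  classical
  haveI : Fintype ↥(Set.range (Deriv L)) := h.fintype
  let Q := ↥(Set.range (Deriv L))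
  let M : DFA ℕ Q :=
    { step := fun s c => ⟨Deriv s.1 [c], by
        obtain ⟨x, hx⟩ := s.2; exact ⟨x ++ [c], by rw [← hx]; exact Deriv_append _ x [c]⟩⟩
      start := ⟨L, ⟨[], Deriv_nil L⟩⟩
      accept := {s | [] ∈ s.1} }
  have key : ∀ (x : List ℕ) (s : Q), (M.evalFrom s x).1 = Deriv s.1 x := by
    intro x
    induction x with
    | nil => intro s; simp [DFA.evalFrom, Deriv_nil]
    | cons c x ih =>
      intro s
      have h1 : M.evalFrom s (c :: x) = M.evalFrom (M.step s c) x := rfl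
      rw [h1, ih]
      show Deriv (Deriv s.1 [c]) x = _
      rw [← Deriv_append]
      rfl
  refine ⟨Q, inferInstance, M, ?_⟩
  ext x
  rw [DFA.mem_accepts]
  show M.evalFrom M.start x ∈ M.accept ↔ _
  have h2 : (M.evalFrom M.start x).1 = Deriv L x := key x M.start
  constructor
  · intro hx
    have : [] ∈ (M.evalFrom M.start x).1 := hx
    rw [h2] at this
    have h3 : x ++ [] ∈ L := this
    simpa using h3
  · intro hx
    show [] ∈ (M.evalFrom M.start x).1
    rw [h2]
    have h3 : x ++ [] ∈ L := by simpa using hx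
    exact h3

theorem finite_suffixes (w : List ℕ) : {t : List ℕ | t <:+ w}.Finite :=
  Set.Finite.ofFinset w.tails.toFinset (by simp [List.mem_tails])

theorem deriv_union (L1 L2 : Set (List ℕ)) (x : List ℕ) :
    Deriv (L1 ∪ L2) x = Deriv L1 x ∪ Deriv L2 x := rfl

theorem finite_deriv_union {L1 L2 : Set (List ℕ)}
    (h1 : (Set.range (Deriv L1)).Finite) (h2 : (Set.range (Deriv L2)).Finite) :
    (Set.range (Deriv (L1 ∪ L2))).Finite := by
  apply Set.Finite.subset (Set.Finite.image2 (· ∪ ·) h1 h2)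
  rintro _ ⟨x, rfl⟩
  exact ⟨_, ⟨x, rfl⟩, _, ⟨x, rfl⟩, (deriv_union _ _ x).symm⟩

theorem finite_deriv_empty : (Set.range (Deriv (∅ : Set (List ℕ)))).Finite := by
  apply Set.Finite.subset (Set.finite_singleton ∅)
  rintro _ ⟨x, rfl⟩
  have : Deriv ∅ x = ∅ := by ext t; simp [Deriv]
  simp [this]

theorem finite_deriv_of_finite {S : Set (List ℕ)} (hS : S.Finite) :
    (Set.range (Deriv S)).Finite := by
  have hsuf : {t : List ℕ | ∃ w ∈ S, t <:+ w}.Finite := by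
    have h1 : {t : List ℕ | ∃ w ∈ S, t <:+ w} = ⋃ w ∈ S, {t | t <:+ w} := by ext; simp
    rw [h1]
    exact hS.biUnion fun w _ => finite_suffixes w
  apply Set.Finite.subset hsuf.finite_subsets
  rintro _ ⟨x, rfl⟩
  intro t ht
  exact ⟨x ++ t, ht, List.suffix_append x t⟩

theorem mem_foldr {LL : List (Set (List ℕ))} {x : List ℕ} :
    x ∈ LL.foldr (· ∪ ·) ∅ ↔ ∃ l ∈ LL, x ∈ l := by
  induction LL with
  | nil => simp
  | cons a LL ih => simp [List.foldr_cons, Set.mem_union, ih]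

theorem finite_deriv_foldr (LL : List (Set (List ℕ)))
    (h : ∀ l ∈ LL, (Set.range (Deriv l)).Finite) :
    (Set.range (Deriv (LL.foldr (· ∪ ·) ∅))).Finite := by
  induction LL with
  | nil => exact finite_deriv_empty
  | cons a LL ih =>
    exact finite_deriv_union (h a (by simp)) (ih fun l hl => h l (by simp [hl]))

def rep (V : List ℕ) (j : ℕ) : List ℕ := (List.replicate j V).flatten

def LAVW (A V W : List ℕ) : Set (List ℕ) := {w | ∃ j, w = A ++ rep V j ++ W}

theorem rep_zero (V : List ℕ) : rep V 0 = [] := rfl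

theorem rep_succ' (V : List ℕ) (j : ℕ) : rep V (j + 1) = rep V j ++ V := by
  rw [rep, List.replicate_succ', List.flatten_append]
  simp [rep]

theorem rep_add (V : List ℕ) (i j : ℕ) : rep V (i + j) = rep V i ++ rep V j := by
  rw [rep, rep, rep, List.replicate_add, List.flatten_append]

theorem len_rep (V : List ℕ) (j : ℕ) : (rep V j).length = j * V.length := by
  induction j with
  | zero => simp [rep_zero]
  | succ j ih => rw [rep_succ', List.length_append, ih, Nat.succ_mul]

theorem suffix_of_append_eq {a b c d : List ℕ} (h : a ++ b = c ++ d)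
    (hl : c.length ≤ a.length) : b <:+ d := by
  have h1 : (a ++ b).drop a.length = b := by simp
  have h2 : (c ++ d).drop a.length = d.drop (a.length - c.length) := by
    rw [List.drop_append, List.drop_eq_nil_of_le hl, List.nil_append]
  rw [h, h2] at h1
  rw [← h1]
  exact List.drop_suffix _ _

theorem prefix_of_append_eq {a b c d : List ℕ} (h : a ++ b = c ++ d)
    (hl : a.length ≤ c.length) : a <+: c := by
  have h1 : a <+: c ++ d := h ▸ List.prefix_append a b
  exact List.prefix_of_prefix_length_le h1 (List.prefix_append c d) hl

theorem suffix_of_suffix_length_le {l₁ l₂ l₃ : List ℕ} (h1 : l₁ <:+ l₃) (h2 : l₂ <:+ l₃)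
    (h : l₁.length ≤ l₂.length) : l₁ <:+ l₂ := by
  rw [← List.reverse_prefix] at h1 h2 ⊢
  exact List.prefix_of_prefix_length_le h1 h2 (by simpa using h)

theorem finite_suffixes' (w : List ℕ) : {t : List ℕ | t <:+ w}.Finite :=
  Set.Finite.ofFinset w.tails.toFinset (by simp [List.mem_tails])

theorem chunk (A V W x d : List ℕ) (j₀ i : ℕ) (hxd : x ++ d = A ++ rep V j₀) :
    A ++ rep V (j₀ + i) ++ W = x ++ (d ++ (rep V i ++ W)) := by
  rw [rep_add, ← List.append_assoc, ← hxd]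
  simp [List.append_assoc]

theorem finite_deriv_AVW (A V W : List ℕ) :
    (Set.range (Deriv (LAVW A V W))).Finite := by
  classical
  have hC1fin : {T : Set (List ℕ) | T ⊆ {t | t <:+ W}}.Finite :=
    (finite_suffixes' W).finite_subsets
  have hC2fin : (insert (∅ : Set (List ℕ))
      ((fun d => LAVW d V W) '' {d | d <:+ V ∨ d <:+ A})).Finite := by
    apply Set.Finite.insert
    apply Set.Finite.image
    have h0 : {d : List ℕ | d <:+ V ∨ d <:+ A} = {d | d <:+ V} ∪ {d | d <:+ A} := rfl
    rw [h0]
    exact (finite_suffixes' V).union (finite_suffixes' A)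
  apply Set.Finite.subset (Set.Finite.image2 (· ∪ ·) hC1fin hC2fin)
  rintro _ ⟨x, rfl⟩
  have hSsub : {t : List ℕ | ∃ j, x ++ t = A ++ rep V j ++ W ∧
      A.length + j * V.length < x.length} ∈ {T : Set (List ℕ) | T ⊆ {t | t <:+ W}} := by
    rintro t ⟨j, hj, hlen⟩
    have hc : (A ++ rep V j).length ≤ x.length := by
      rw [List.length_append, len_rep]; omega
    exact suffix_of_append_eq hj hc
  by_cases hP : ∃ j, ∃ t, x ++ t = A ++ rep V j ++ W ∧ x.length ≤ A.length + j * V.length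
  · obtain ⟨j₀, hj₀⟩ : ∃ j, j = Nat.find hP := ⟨_, rfl⟩
    have hspec : ∃ t, x ++ t = A ++ rep V j₀ ++ W ∧ x.length ≤ A.length + j₀ * V.length := by
      rw [hj₀]; exact Nat.find_spec hP
    have hmin : ∀ m, (∃ t, x ++ t = A ++ rep V m ++ W ∧
        x.length ≤ A.length + m * V.length) → j₀ ≤ m := by
      rw [hj₀]; exact fun m hm => Nat.find_min' hP hm
    clear hj₀
    obtain ⟨t₀, ht₀, hlen₀⟩ := hspec
    have hxpre : x <+: A ++ rep V j₀ := by
      apply prefix_of_append_eq ht₀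
      rw [List.length_append, len_rep]; exact hlen₀
    obtain ⟨d, hxd⟩ : ∃ d, x ++ d = A ++ rep V j₀ :=
      ⟨_, List.prefix_iff_eq_append.mp hxpre⟩
    have hdlen : x.length + d.length = A.length + j₀ * V.length := by
      have hc := congrArg List.length hxd
      simpa [len_rep] using hc
    have hdsuf : d <:+ A ++ rep V j₀ := ⟨x, hxd⟩
    have hdmem : d <:+ V ∨ d <:+ A := by
      cases j₀ with
      | zero =>
        right
        simpa [rep_zero] using hdsuf
      | succ i =>
        left
        have hgt : A.length + i * V.length < x.length := by
          by_contra hhh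
          push_neg at hhh
          have hxpre' : x <+: A ++ rep V i := by
            apply List.prefix_of_prefix_length_le _ (List.prefix_append (A ++ rep V i) V) _
            · rw [List.append_assoc, ← rep_succ']; exact hxpre
            · rw [List.length_append, len_rep]; exact hhh
          have hPi : ∃ t, x ++ t = A ++ rep V i ++ W ∧
              x.length ≤ A.length + i * V.length := by
            refine ⟨(A ++ rep V i).drop x.length ++ W, ?_, hhh⟩
            rw [← List.append_assoc, List.prefix_iff_eq_append.mp hxpre']
          exact absurd (hmin i hPi) (by omega)
        have hdV : d.length ≤ V.length := by
          rw [Nat.succ_mul] at hdlen; omega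
        refine suffix_of_suffix_length_le hdsuf ?_ hdV
        exact ⟨A ++ rep V i, by rw [List.append_assoc, ← rep_succ']⟩
    refine ⟨_, hSsub, LAVW d V W, Set.mem_insert_iff.mpr (Or.inr ⟨d, hdmem, rfl⟩), ?_⟩
    ext t
    simp only [Deriv, LAVW, Set.mem_setOf_eq, Set.mem_union]
    constructor
    · rintro (⟨j, hj, _⟩ | ⟨i, hi⟩)
      · exact ⟨j, hj⟩
      · refine ⟨j₀ + i, ?_⟩
        rw [chunk A V W x d j₀ i hxd, hi]
        simp [List.append_assoc]
    · rintro ⟨j, hj⟩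
      rcases lt_or_ge (A.length + j * V.length) x.length with hlt | hle
      · exact Or.inl ⟨j, hj, hlt⟩
      · right
        have hjge : j₀ ≤ j := hmin j ⟨t, hj, hle⟩
        refine ⟨j - j₀, ?_⟩
        have hj' : x ++ t = A ++ rep V (j₀ + (j - j₀)) ++ W := by
          rw [show j₀ + (j - j₀) = j by omega]; exact hj
        rw [chunk A V W x d j₀ (j - j₀) hxd] at hj'
        have ht : t = d ++ (rep V (j - j₀) ++ W) := List.append_cancel_left hj'
        rw [ht, ← List.append_assoc]
  · refine ⟨_, hSsub, ∅, Set.mem_insert _ _, ?_⟩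
    ext t
    simp only [Deriv, LAVW, Set.mem_setOf_eq, Set.union_empty]
    constructor
    · rintro ⟨j, hj, _⟩
      exact ⟨j, hj⟩
    · rintro ⟨j, hj⟩
      rcases lt_or_ge (A.length + j * V.length) x.length with hlt | hle
      · exact ⟨j, hj, hlt⟩
      · exact absurd ⟨j, t, hj, hle⟩ hP

/-- base-b digits of y padded with zeros to length m -/

def dig (b m y : ℕ) : List ℕ :=
  Nat.digits b y ++ List.replicate (m - (Nat.digits b y).length) 0

theorem digLen_le {b y m : ℕ} (hb : 2 ≤ b) (hy : y < b ^ m) :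
    (Nat.digits b y).length ≤ m := by
  rcases Nat.eq_zero_or_pos y with rfl | hy0
  · simp
  by_contra h
  push_neg at h
  have h1 : b ^ (Nat.digits b y).length ≤ b * y :=
    Nat.base_pow_length_digits_le b y (by omega) (by omega)
  have h2 : b ^ (m + 1) ≤ b ^ (Nat.digits b y).length := Nat.pow_le_pow_right (by omega) h
  have h3 : b * y < b * b ^ m := mul_lt_mul_of_pos_left hy (by omega)
  have h4 : b * b ^ m < b * b ^ m :=
    calc b * b ^ m = b ^ (m + 1) := (pow_succ' b m).symm
    _ ≤ b ^ (Nat.digits b y).length := h2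
    _ ≤ b * y := h1
    _ < b * b ^ m := h3
  exact absurd h4 (lt_irrefl _)

theorem dig_length {b m y : ℕ} (h : (Nat.digits b y).length ≤ m) :
    (dig b m y).length = m := by
  simp only [dig, List.length_append, List.length_replicate]
  omega

theorem dig_succ {b : ℕ} (hb : 2 ≤ b) (m y : ℕ) :
    dig b (m + 1) y = y % b :: dig b m (y / b) := by
  rcases Nat.eq_zero_or_pos y with rfl | hy0
  · simp [dig, List.replicate_succ]
  · rw [dig, Nat.digits_def' (by omega : 1 < b) hy0, dig]
    simp only [List.cons_append, List.length_cons]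
    have harith : m + 1 - ((Nat.digits b (y / b)).length + 1) =
        m - (Nat.digits b (y / b)).length := by omega
    rw [harith]

theorem digits_mul_pow_add {b : ℕ} (hb : 2 ≤ b) {h : ℕ} (hh : 1 ≤ h) :
    ∀ (m y : ℕ), y < b ^ m →
      Nat.digits b (h * b ^ m + y) = dig b m y ++ Nat.digits b h := by
  intro m
  induction m with
  | zero =>
    intro y hy
    have hy0 : y = 0 := by simpa using hy
    subst hy0
    simp [dig]
  | succ m ih =>
    intro y hy
    have hbpos : 0 < b := by omega
    have hpos : 0 < h * b ^ (m + 1) + y := by positivity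
    rw [Nat.digits_def' (by omega : 1 < b) hpos]
    have he : h * b ^ (m + 1) = h * b ^ m * b := by ring
    have hmod : (h * b ^ (m + 1) + y) % b = y % b := by
      rw [he, Nat.add_comm, Nat.add_mul_mod_self_right]
    have hdiv : (h * b ^ (m + 1) + y) / b = h * b ^ m + y / b := by
      rw [he, Nat.add_comm, Nat.add_mul_div_right _ _ hbpos, Nat.add_comm]
    have hyb : y / b < b ^ m := by
      rw [Nat.div_lt_iff_lt_mul hbpos, ← pow_succ]
      exact hy
    rw [hmod, hdiv, ih (y / b) hyb, dig_succ hb]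
    rfl

theorem dig_add {b : ℕ} (hb : 2 ≤ b) {m l y c : ℕ} (hy : y < b ^ m) (hc : c < b ^ l) :
    dig b (m + l) (y + c * b ^ m) = dig b m y ++ dig b l c := by
  have hylen := digLen_le hb hy
  rcases Nat.eq_zero_or_pos c with rfl | hc0
  · simp only [Nat.zero_mul, Nat.add_zero]
    rw [dig, dig, dig]
    simp only [Nat.digits_zero, List.length_nil, Nat.sub_zero, List.nil_append,
      List.append_assoc, ← List.replicate_add]
    congr 2
    omega
  · have h1 : Nat.digits b (c * b ^ m + y) = dig b m y ++ Nat.digits b c :=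
      digits_mul_pow_add hb hc0 m y hy
    have h2 : y + c * b ^ m = c * b ^ m + y := by ring
    rw [dig, h2, h1]
    have hclen := digLen_le hb hc
    have hlen : (dig b m y ++ Nat.digits b c).length = m + (Nat.digits b c).length := by
      rw [List.length_append, dig_length hylen]
    rw [hlen, List.append_assoc]
    congr 1
    rw [show m + l - (m + (Nat.digits b c).length) = l - (Nat.digits b c).length by omega]
    rfl

theorem geom (Q k : ℕ) : Q * (∑ i ∈ Finset.range k, (Q + 1) ^ i) + 1 = (Q + 1) ^ k := by
  induction k with
  | zero => simp
  | succ k ih =>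
    rw [Finset.sum_range_succ, Nat.mul_add, Nat.add_right_comm, ih, pow_succ]
    ring

theorem xsol {P a : ℕ} {x : ℕ → ℕ} (hrec : ∀ k, x (k + 1) = P * x k + a) (k : ℕ) :
    x k = P ^ k * x 0 + a * ∑ i ∈ Finset.range k, P ^ i := by
  induction k with
  | zero => simp
  | succ k ih =>
    have hplus : ∑ i ∈ Finset.range (k + 1), P ^ i
        = P * ∑ i ∈ Finset.range k, P ^ i + 1 := by
      rw [Finset.sum_range_succ', Finset.mul_sum]
      simp [pow_succ, Nat.mul_comm]
    rw [hrec, ih, hplus, pow_succ]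
    ring

theorem renorm (P a : ℕ) (hP : 2 ≤ P) (x : ℕ → ℕ) (hx1 : 1 ≤ x 0)
    (hrec : ∀ k, x (k + 1) = P * x k + a) :
    ∃ (k₁ h a' : ℕ) (R : ℕ → ℕ), 1 ≤ h ∧ a' < P ∧
      (∀ j, x (k₁ + j) = h * P ^ (k₁ + j) + R j ∧ R j < P ^ (k₁ + j)) ∧
      (∀ j, R (j + 1) = R j + a' * P ^ (k₁ + j)) := by
  obtain ⟨Q, rfl⟩ : ∃ Q, P = Q + 1 := ⟨P - 1, by omega⟩
  have hQ : 1 ≤ Q := by omega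
  have base : ∃ k₁ h a' R₀, 1 ≤ h ∧ a' ≤ Q ∧ x k₁ = h * (Q + 1) ^ k₁ + R₀ ∧
      R₀ < (Q + 1) ^ k₁ ∧ Q * R₀ + a = a' * (Q + 1) ^ k₁ := by
    by_cases ha : a = 0
    · exact ⟨0, x 0, 0, 0, hx1, by omega, by simp, by simp, by simp [ha]⟩
    · set k₁ := a + 1 with hk₁
      set G := ∑ i ∈ Finset.range k₁, (Q + 1) ^ i with hG
      have hgeom : Q * G + 1 = (Q + 1) ^ k₁ := geom Q k₁
      have hGge : k₁ ≤ G := by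
        calc k₁ = ∑ _i ∈ Finset.range k₁, 1 := by simp
        _ ≤ G := Finset.sum_le_sum fun i _ => Nat.one_le_pow _ _ (by omega)
      have hPk : a < (Q + 1) ^ k₁ := by
        calc a < 2 ^ (a + 1) := by
              have h2p := Nat.lt_two_pow_self (n := a)
              have h2 : (2:ℕ) ^ a ≤ 2 ^ (a + 1) := Nat.pow_le_pow_right (by omega) (by omega)
              omega
        _ ≤ (Q + 1) ^ k₁ := Nat.pow_le_pow_left hP _
      set q := a / Q with hq
      set s := a % Q with hs
      have hqs : Q * q + s = a := Nat.div_add_mod a Q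
      have hqa : q ≤ a := Nat.div_le_self a Q
      have hsQ : s < Q := Nat.mod_lt _ (by omega)
      clear_value q s
      clear hq hs
      have hxk : x k₁ = (Q + 1) ^ k₁ * x 0 + a * G := xsol hrec k₁
      have hgeomZ : (Q : ℤ) * G + 1 = ((Q : ℤ) + 1) ^ k₁ := by exact_mod_cast hgeom
      have hxkZ : ((x k₁ : ℕ) : ℤ) = ((Q : ℤ) + 1) ^ k₁ * (x 0 : ℕ) + (a : ℤ) * G := by
        exact_mod_cast hxk
      have haZ : (a : ℤ) = (Q : ℤ) * (q : ℤ) + (s : ℤ) := by exact_mod_cast hqs.symm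
      by_cases hs0 : s = 0
      · have hq1 : 1 ≤ q := by
          rcases Nat.eq_zero_or_pos q with h0 | h1
          · exfalso; apply ha; subst h0; omega
          · exact h1
        have hsZ : (s : ℤ) = 0 := by exact_mod_cast hs0
        refine ⟨k₁, x 0 + (q - 1), Q, (Q + 1) ^ k₁ - q, by omega, le_refl _, ?_, by omega, ?_⟩
        · zify [hq1, Nat.le_of_lt (lt_of_le_of_lt hqa hPk)]
          rw [hsZ] at haZ
          linear_combination hxkZ + (G : ℤ) * haZ + (q : ℤ) * hgeomZ
        · zify [Nat.le_of_lt (lt_of_le_of_lt hqa hPk)]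
          rw [hsZ] at haZ
          linear_combination haZ
      · have hs1 : 1 ≤ s := by omega
        have hsq : q + 1 ≤ s * G := by
          calc q + 1 ≤ k₁ := by omega
          _ ≤ G := hGge
          _ = 1 * G := (Nat.one_mul _).symm
          _ ≤ s * G := Nat.mul_le_mul_right _ hs1
        refine ⟨k₁, x 0 + q, s, s * G - q, by omega, by omega, ?_, ?_, ?_⟩
        · zify [Nat.le_of_lt (by omega : q < s * G)]
          linear_combination hxkZ + (G : ℤ) * haZ + (q : ℤ) * hgeomZ
        · have h1 : s * G ≤ Q * G := Nat.mul_le_mul_right _ (by omega)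
          omega
        · zify [Nat.le_of_lt (by omega : q < s * G)]
          linear_combination haZ + (s : ℤ) * hgeomZ
  obtain ⟨k₁, h, a', R₀, hh1, ha'Q, hbase1, hbase2, hbase3⟩ := base
  set R : ℕ → ℕ := fun j => Nat.rec R₀ (fun j Rj => Rj + a' * (Q + 1) ^ (k₁ + j)) j with hR
  have hR0 : R 0 = R₀ := rfl
  have hRsucc : ∀ j, R (j + 1) = R j + a' * (Q + 1) ^ (k₁ + j) := fun j => rfl
  have key : ∀ j, x (k₁ + j) = h * (Q + 1) ^ (k₁ + j) + R j ∧ R j < (Q + 1) ^ (k₁ + j) ∧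
      Q * R j + a = a' * (Q + 1) ^ (k₁ + j) := by
    intro j
    induction j with
    | zero => exact ⟨by simpa [hR0] using hbase1, by simpa [hR0] using hbase2,
        by simpa [hR0] using hbase3⟩
    | succ j ih =>
      obtain ⟨ih1, ih2, ih3⟩ := ih
      have hxs : x (k₁ + (j + 1)) = (Q + 1) * x (k₁ + j) + a := by
        rw [show k₁ + (j + 1) = (k₁ + j) + 1 by ring]
        exact hrec _
      have hpow : (Q + 1) ^ (k₁ + (j + 1)) = (Q + 1) ^ (k₁ + j) * (Q + 1) := by
        rw [show k₁ + (j + 1) = (k₁ + j) + 1 by ring, pow_succ]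
      refine ⟨?_, ?_, ?_⟩
      · rw [hxs, ih1, hRsucc j, hpow]
        zify at ih3 ⊢
        linear_combination ih3
      · rw [hRsucc j, hpow]
        have h1 : a' * (Q + 1) ^ (k₁ + j) ≤ Q * (Q + 1) ^ (k₁ + j) :=
          Nat.mul_le_mul_right _ ha'Q
        have h2 : (Q + 1) ^ (k₁ + j) + Q * (Q + 1) ^ (k₁ + j)
            = (Q + 1) ^ (k₁ + j) * (Q + 1) := by ring
        omega
      · rw [hRsucc j, hpow]
        zify at ih3 ⊢
        linear_combination ih3
  exact ⟨k₁, h, a', R, hh1, by omega, fun j => ⟨(key j).1, (key j).2.1⟩, hRsucc⟩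

theorem rep_succ (V : List ℕ) (j : ℕ) : rep V (j + 1) = V ++ rep V j := by
  rw [rep, List.replicate_succ, List.flatten_cons]; rfl

theorem rev_rep (V : List ℕ) (j : ℕ) : (rep V j).reverse = rep V.reverse j := by
  induction j with
  | zero => simp [rep]
  | succ j ih => rw [rep_succ', List.reverse_append, ih, rep_succ]

theorem v_rec (b : ℕ) (u : ℕ → ℕ) (n : ℕ) :
    (∑ i ∈ Finset.range (n + 1 + 1), u i * b ^ (n + 1 - i))
      = b * (∑ i ∈ Finset.range (n + 1), u i * b ^ (n - i)) + u (n + 1) := by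
  rw [Finset.sum_range_succ, Finset.mul_sum]
  congr 1
  · apply Finset.sum_congr rfl
    intro i hi
    have hi' : i ≤ n := by
      have := Finset.mem_range.mp hi; omega
    rw [show n + 1 - i = (n - i) + 1 by omega, pow_succ]
    ring
  · simp

theorem v_pos (b : ℕ) (hb : 2 ≤ b) (u : ℕ → ℕ) (hu0 : 1 ≤ u 0) (n : ℕ) :
    1 ≤ ∑ i ∈ Finset.range (n + 1), u i * b ^ (n - i) := by
  have h0 : 0 ∈ Finset.range (n + 1) := by simp
  have h1 := Finset.single_le_sum (f := fun i => u i * b ^ (n - i))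
    (fun i _ => Nat.zero_le _) h0
  have h1' : u 0 * b ^ n ≤ ∑ i ∈ Finset.range (n + 1), u i * b ^ (n - i) := by
    simpa using h1
  have h2 : 0 < u 0 * b ^ n := Nat.mul_pos (by omega) (pow_pos (by omega : 0 < b) n)
  omega

theorem v_step (b : ℕ) (u : ℕ → ℕ) (m n : ℕ) :
    (∑ i ∈ Finset.range (n + m + 1), u i * b ^ (n + m - i))
      = b ^ m * (∑ i ∈ Finset.range (n + 1), u i * b ^ (n - i))
        + ∑ j ∈ Finset.range m, u (n + 1 + j) * b ^ (m - 1 - j) := by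
  induction m with
  | zero => simp
  | succ m ih =>
    have hA : (∑ j ∈ Finset.range (m + 1), u (n + 1 + j) * b ^ (m + 1 - 1 - j))
        = b * (∑ j ∈ Finset.range m, u (n + 1 + j) * b ^ (m - 1 - j)) + u (n + 1 + m) := by
      rw [Finset.sum_range_succ, Finset.mul_sum]
      congr 1
      · apply Finset.sum_congr rfl
        intro j hj
        have hj' : j < m := Finset.mem_range.mp hj
        rw [show m + 1 - 1 - j = (m - 1 - j) + 1 by omega, pow_succ]
        ring
      · simp
    have h1 : n + (m + 1) = (n + m) + 1 := by omega
    rw [h1, v_rec b u (n + m), ih, hA, pow_succ,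
      show n + m + 1 = n + 1 + m by omega]
    ring

end Stmt13

theorem stmt_13 (b B : ℕ) (hb : 2 ≤ b) (hB : 2 ≤ B)
    (u : ℕ → ℕ) (hu : ∀ i, u i < B) (hu0 : 1 ≤ u 0)
    (hper : ∃ N p : ℕ, 1 ≤ p ∧ ∀ n ≥ N, u (n + p) = u n)
    (L : Language ℕ)
    (hL : L = {w : List ℕ | ∃ n : ℕ,
      w = (Nat.digits b (∑ i ∈ Finset.range (n + 1), u i * b ^ (n - i))).reverse}) :
    L.IsRegular := by
  classical
  obtain ⟨N, p, hp1, hper⟩ := hper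
  set v : ℕ → ℕ := fun n => ∑ i ∈ Finset.range (n + 1), u i * b ^ (n - i) with hv
  have hP2 : 2 ≤ b ^ p := by
    calc (2:ℕ) ≤ b := hb
    _ = b ^ 1 := (pow_one b).symm
    _ ≤ b ^ p := Nat.pow_le_pow_right (by omega) hp1
  have Hclass : ∀ r : ℕ, ∃ (A V W : List ℕ) (k₁ : ℕ), ∀ j : ℕ,
      (Nat.digits b (v (N + r + (k₁ + j) * p))).reverse
        = A ++ Stmt13.rep V j ++ W := by
    intro r
    set x : ℕ → ℕ := fun k => v (N + r + k * p) with hx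
    set ar : ℕ := ∑ j ∈ Finset.range p, u (N + r + 1 + j) * b ^ (p - 1 - j) with har
    have hsum_per : ∀ k,
        (∑ j ∈ Finset.range p, u (N + r + k * p + 1 + j) * b ^ (p - 1 - j)) = ar := by
      intro k
      induction k with
      | zero => simp [har]
      | succ k ih =>
        rw [← ih]
        apply Finset.sum_congr rfl
        intro j _
        have h1 : N + r + (k + 1) * p + 1 + j = (N + r + k * p + 1 + j) + p := by
          rw [Nat.succ_mul]; ring
        rw [h1, hper _ (by omega)]
    have hxrec : ∀ k, x (k + 1) = b ^ p * x k + ar := by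
      intro k
      show v (N + r + (k + 1) * p) = b ^ p * v (N + r + k * p) + ar
      have h1 : N + r + (k + 1) * p = (N + r + k * p) + p := by rw [Nat.succ_mul]; ring
      rw [h1, ← hsum_per k]
      exact Stmt13.v_step b u p (N + r + k * p)
    have hx1 : 1 ≤ x 0 := Stmt13.v_pos b hb u hu0 _
    obtain ⟨k₁, h, a', R, hh1, ha', hkey, hRsucc⟩ :=
      Stmt13.renorm (b ^ p) ar hP2 x hx1 hxrec
    refine ⟨(Nat.digits b h).reverse, (Stmt13.dig b p a').reverse,
      (Stmt13.dig b (k₁ * p) (R 0)).reverse, k₁, ?_⟩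
    have hpm : ∀ t : ℕ, (b ^ p) ^ t = b ^ (t * p) := fun t => by rw [mul_comm, pow_mul]
    have hdig : ∀ j, Nat.digits b (x (k₁ + j))
        = Stmt13.dig b ((k₁ + j) * p) (R j) ++ Nat.digits b h := by
      intro j
      obtain ⟨h1, h2⟩ := hkey j
      rw [hpm] at h1 h2
      rw [h1]
      exact Stmt13.digits_mul_pow_add hb hh1 _ _ h2
    have hblocks : ∀ j, Stmt13.dig b ((k₁ + j) * p) (R j)
        = Stmt13.dig b (k₁ * p) (R 0) ++ Stmt13.rep (Stmt13.dig b p a') j := by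
      intro j
      induction j with
      | zero => simp [Stmt13.rep]
      | succ j ih =>
        have h1 : (k₁ + (j + 1)) * p = (k₁ + j) * p + p := by ring
        have h2 : R (j + 1) = R j + a' * b ^ ((k₁ + j) * p) := by rw [hRsucc j, hpm]
        obtain ⟨_, hRlt⟩ := hkey j
        rw [hpm] at hRlt
        rw [h1, h2, Stmt13.dig_add hb hRlt ha', ih, Stmt13.rep_succ', List.append_assoc]
    intro j
    show (Nat.digits b (x (k₁ + j))).reverse = _
    rw [hdig j, hblocks j, List.reverse_append, List.reverse_append, Stmt13.rev_rep]
    simp [List.append_assoc]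
  choose Af Vf Wf k₁f hclass using Hclass
  set K : ℕ := Finset.sup (Finset.range p) k₁f with hK
  set M : ℕ := N + p * (K + 1) with hM
  set F0 : Set (List ℕ) := (fun n => (Nat.digits b (v n)).reverse) '' (Set.Iio M) with hF0
  set LL : List (Set (List ℕ)) :=
    F0 :: (List.range p).map (fun r => Stmt13.LAVW (Af r) (Vf r) (Wf r)) with hLL
  have hfold : L = LL.foldr (· ∪ ·) ∅ := by
    rw [hL]
    refine Set.ext fun w => ?_
    have hveq : ∀ n : ℕ,
        (∑ i ∈ Finset.range (n + 1), u i * b ^ (n - i)) = v n := fun n => rfl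
    simp only [Set.mem_setOf_eq, hveq]
    rw [Stmt13.mem_foldr]
    constructor
    · rintro ⟨n, rfl⟩
      by_cases hn : n < M
      · exact ⟨F0, List.mem_cons_self, ⟨n, hn, rfl⟩⟩
      · push_neg at hn
        set k := (n - N) / p with hk
        set r := (n - N) % p with hr
        have hdm : p * k + r = n - N := Nat.div_add_mod _ _
        have hrp : r < p := Nat.mod_lt _ (by omega)
        have hcomm : (K + 1) * p = p * (K + 1) := Nat.mul_comm _ _
        have hkK : K + 1 ≤ k := by
          rw [hk, Nat.le_div_iff_mul_le (by omega : 0 < p)]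
          omega
        have hk₁ : k₁f r ≤ K := Finset.le_sup (Finset.mem_range.mpr hrp)
        have hcomm2 : k * p = p * k := Nat.mul_comm _ _
        have hn' : n = N + r + (k₁f r + (k - k₁f r)) * p := by
          have h1 : k₁f r + (k - k₁f r) = k := by omega
          rw [h1]
          omega
        refine ⟨Stmt13.LAVW (Af r) (Vf r) (Wf r),
          List.mem_cons_of_mem _ (List.mem_map_of_mem (List.mem_range.mpr hrp)),
          k - k₁f r, ?_⟩
        rw [hn']
        exact hclass r (k - k₁f r)
    · rintro ⟨l, hl, hw⟩
      rcases List.mem_cons.mp hl with rfl | hl'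
      · obtain ⟨n, _, hwn⟩ := hw
        exact ⟨n, hwn.symm⟩
      · obtain ⟨r, _, rfl⟩ := List.mem_map.mp hl'
        obtain ⟨j, hwj⟩ := hw
        refine ⟨N + r + (k₁f r + j) * p, ?_⟩
        rw [hwj]
        exact (hclass r j).symm
  rw [hfold]
  apply Stmt13.regular_of_finite_deriv
  apply Stmt13.finite_deriv_foldr
  intro l hl
  rcases List.mem_cons.mp hl with rfl | hl'
  · exact Stmt13.finite_deriv_of_finite ((Set.finite_Iio M).image _)
  · obtain ⟨r, _, rfl⟩ := List.mem_map.mp hl'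
    exact Stmt13.finite_deriv_AVW _ _ _
end

section
/- Let b ≥ 2, B ≥ 2 be integers and u a sequence over {0,…,B−1} with u_0 ≥ 1. If the language L_b(u) = { (Σ_{i=0}^n u_i b^{n−i})_b : n ≥ 0 } is regular, then u is ultimately periodic. -/
namespace Stmt14Aux

/-- big-endian, zero-padded to length `k`, base-`b` word of `s` -/
def Z (b k s : ℕ) : List ℕ :=
  List.replicate (k - (Nat.digits b s).length) 0 ++ (Nat.digits b s).reverse

lemma len_le_of_lt_pow {b m n : ℕ} (hb : 1 < b) (h : m < b ^ n) :
    (Nat.digits b m).length ≤ n := by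
  rcases Nat.eq_zero_or_pos m with rfl | hm
  · simp
  by_contra hlen
  push_neg at hlen
  have h1 : b ^ (Nat.digits b m).length ≤ b * m :=
    Nat.base_pow_length_digits_le b m hb hm.ne'
  have h2 : b ^ (n + 1) ≤ b ^ (Nat.digits b m).length :=
    Nat.pow_le_pow_right (by omega) hlen
  have h3 : b * m < b * b ^ n := mul_lt_mul_of_pos_left h (by omega)
  rw [← pow_succ'] at h3
  omega

lemma lt_len_of_pow_le {b m n : ℕ} (hb : 1 < b) (h : b ^ n ≤ m) :
    n < (Nat.digits b m).length := by
  by_contra hlen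
  push_neg at hlen
  have h1 : m < b ^ (Nat.digits b m).length := Nat.lt_base_pow_length_digits hb
  have h2 : b ^ (Nat.digits b m).length ≤ b ^ n := Nat.pow_le_pow_right (by omega) hlen
  omega

lemma Z_length {b k s : ℕ} (hb : 1 < b) (hs : s < b ^ k) : (Z b k s).length = k := by
  have := len_le_of_lt_pow hb hs
  simp only [Z, List.length_append, List.length_replicate, List.length_reverse]
  omega

lemma ofDigits_replicate_zero (b n : ℕ) : Nat.ofDigits b (List.replicate n 0) = 0 := by
  induction n with
  | zero => simp
  | succ n ih => simp [List.replicate_succ, Nat.ofDigits_cons, ih]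

lemma Z_val {b k s : ℕ} : Nat.ofDigits b (Z b k s).reverse = s := by
  simp [Z, List.reverse_append, Nat.ofDigits_append, Nat.ofDigits_digits,
    ofDigits_replicate_zero]

lemma Z_reverse_succ {b : ℕ} (hb : 1 < b) (k s : ℕ) :
    (Z b (k + 1) s).reverse = s % b :: (Z b k (s / b)).reverse := by
  simp only [Z, List.reverse_append, List.reverse_reverse, List.reverse_replicate]
  rcases Nat.eq_zero_or_pos s with rfl | hs
  · simp [List.replicate_succ]
  · rw [Nat.digits_def' hb hs]
    simp [List.cons_append, Nat.succ_sub_succ]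

lemma digits_split {b : ℕ} (hb : 1 < b) (a : ℕ) (ha : 0 < a) :
    ∀ k s, s < b ^ k →
      Nat.digits b (a * b ^ k + s) = (Z b k s).reverse ++ Nat.digits b a := by
  intro k
  induction k with
  | zero =>
    intro s hs
    rw [pow_zero] at hs
    obtain rfl : s = 0 := by omega
    simp [Z]
  | succ k ih =>
    intro s hs
    have hbpos : 0 < b := by omega
    have hpos : 0 < a * b ^ (k + 1) + s := by positivity
    rw [Nat.digits_def' hb hpos]
    have hrw : a * b ^ (k + 1) + s = b * (a * b ^ k) + s := by ring
    have hmod : (a * b ^ (k + 1) + s) % b = s % b := by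
      rw [hrw, Nat.mul_add_mod]
    have hdiv : (a * b ^ (k + 1) + s) / b = a * b ^ k + s / b := by
      rw [hrw, Nat.mul_add_div hbpos]
    have hsb : s / b < b ^ k := by
      rw [Nat.div_lt_iff_lt_mul hbpos, ← pow_succ]
      exact hs
    rw [hmod, hdiv, ih (s / b) hsb, Z_reverse_succ hb, List.cons_append]

end Stmt14Aux

open Stmt14Aux in
theorem stmt_14 (b B : ℕ) (hb : 2 ≤ b) (hB : 2 ≤ B)
    (u : ℕ → ℕ) (hu : ∀ i, u i < B) (hu0 : 1 ≤ u 0)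
    (L : Language ℕ)
    (hL : L = {w : List ℕ | ∃ n : ℕ,
      w = (Nat.digits b (∑ i ∈ Finset.range (n + 1), u i * b ^ (n - i))).reverse})
    (hreg : L.IsRegular) :
    ∃ N p : ℕ, 1 ≤ p ∧ ∀ n ≥ N, u (n + p) = u n := by
  classical
  have hb1 : 1 < b := hb
  have hbpos : 0 < b := by omega
  set v : ℕ → ℕ := fun n => ∑ i ∈ Finset.range (n + 1), u i * b ^ (n - i) with hv
  -- recurrence
  have v_succ : ∀ n, v (n + 1) = b * v n + u (n + 1) := by
    intro n
    simp only [hv]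
    rw [Finset.sum_range_succ]
    have h1 : ∑ i ∈ Finset.range (n + 1), u i * b ^ (n + 1 - i)
        = b * ∑ i ∈ Finset.range (n + 1), u i * b ^ (n - i) := by
      rw [Finset.mul_sum]
      apply Finset.sum_congr rfl
      intro i hi
      have : i ≤ n := by simpa using Nat.lt_succ_iff.mp (Finset.mem_range.mp hi)
      have he : n + 1 - i = (n - i) + 1 := by omega
      rw [he, pow_succ]
      ring
    rw [h1]
    simp
  -- lower bound
  have v_lb : ∀ n, b ^ n ≤ v n := by
    intro n
    induction n with
    | zero => simpa [hv] using hu0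
    | succ n ih =>
      rw [v_succ n]
      calc b ^ (n + 1) = b * b ^ n := by rw [pow_succ]; ring
        _ ≤ b * v n := Nat.mul_le_mul_left _ ih
        _ ≤ b * v n + u (n + 1) := Nat.le_add_right _ _
  have v_pos : ∀ n, 1 ≤ v n := fun n => le_trans (Nat.one_le_pow _ _ hbpos) (v_lb n)
  -- upper bound
  have v_ub : ∀ j t, v (j + t) + B ≤ (v j + B) * b ^ t := by
    intro j t
    induction t with
    | zero => simp
    | succ t ih =>
      have h1 : v (j + (t + 1)) = b * v (j + t) + u (j + t + 1) := by
        have : j + (t + 1) = (j + t) + 1 := by omega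
        rw [this, v_succ]
      have h2 : u (j + t + 1) < B := hu _
      have h3 : b * (v (j + t) + B) ≤ b * ((v j + B) * b ^ t) := Nat.mul_le_mul_left _ ih
      have h4 : v (j + (t + 1)) + B ≤ b * (v (j + t) + B) := by
        rw [h1]
        have : u (j + t + 1) + B ≤ 2 * B := by omega
        nlinarith
      calc v (j + (t + 1)) + B ≤ b * ((v j + B) * b ^ t) := le_trans h4 h3
        _ = (v j + B) * b ^ (t + 1) := by rw [pow_succ]; ring
  -- global upper bound for digit lengths
  set E : ℕ := v 0 + B with hE
  have v_lt_pow : ∀ n, v n < b ^ (n + E) := by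
    intro n
    have h1 : v (0 + n) + B ≤ (v 0 + B) * b ^ n := v_ub 0 n
    have h2 : v 0 + B < 2 ^ E := by
      have := @Nat.lt_two_pow_self E
      omega
    have h3 : (2 : ℕ) ^ E ≤ b ^ E := Nat.pow_le_pow_left hb E
    have h4 : (v 0 + B) * b ^ n < b ^ E * b ^ n := by
      have hbn : 0 < b ^ n := Nat.pow_pos hbpos
      exact mul_lt_mul_of_pos_right (by omega) hbn
    have h5 : b ^ E * b ^ n = b ^ (n + E) := by rw [← pow_add]; ring_nf
    have h0n : 0 + n = n := by omega
    rw [h0n] at h1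
    omega
  -- stabilization of high-order prefixes
  have stab : ∀ j : ℕ, ∃ Mj Aj : ℕ, j ≤ Mj ∧ 1 ≤ Aj ∧
      ∀ m, Mj ≤ m → v m / b ^ (m - j) = Aj := by
    intro j
    set g : ℕ → ℕ := fun t => v (j + t) / b ^ t with hg
    have gmono : Monotone g := by
      apply monotone_nat_of_le_succ
      intro t
      have h1 : v (j + (t + 1)) = b * v (j + t) + u (j + t + 1) := by
        have : j + (t + 1) = (j + t) + 1 := by omega
        rw [this, v_succ]
      have h2 : b * v (j + t) / b ^ (t + 1) ≤ v (j + (t + 1)) / b ^ (t + 1) := by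
        apply Nat.div_le_div_right
        rw [h1]; omega
      have h3 : b * v (j + t) / b ^ (t + 1) = v (j + t) / b ^ t := by
        rw [pow_succ']
        exact Nat.mul_div_mul_left _ _ hbpos
      simpa only [hg, h3] using h2
    have gbdd : ∀ t, g t ≤ v j + B := by
      intro t
      have h1 : v (j + t) ≤ (v j + B) * b ^ t := by have := v_ub j t; omega
      have h2 : v (j + t) / b ^ t ≤ (v j + B) * b ^ t / b ^ t :=
        Nat.div_le_div_right h1
      rwa [Nat.mul_div_cancel _ (Nat.pow_pos hbpos)] at h2
    have hbddA : BddAbove (Set.range g) := ⟨v j + B, by rintro x ⟨t, rfl⟩; exact gbdd t⟩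
    obtain ⟨T, hT⟩ := Nat.sSup_mem (Set.range_nonempty g) hbddA
    refine ⟨j + T, g T, by omega, ?_, ?_⟩
    · have h0 : g 0 ≤ g T := gmono (Nat.zero_le T)
      have : v j ≤ g 0 := by simp [hg]
      have := v_pos j
      omega
    · intro m hm
      have ht : T ≤ m - j := by omega
      have hle : g T ≤ g (m - j) := gmono ht
      have hge : g (m - j) ≤ g T := by
        rw [hT]; exact le_csSup hbddA ⟨m - j, rfl⟩
      have hmj : j + (m - j) = m := by omega
      have : g (m - j) = v m / b ^ (m - j) := by rw [hg]; simp [hmj]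
      omega
  choose Mf Af hjM hA1 hstab using stab
  -- the automaton
  obtain ⟨σ, hσ, M, hM⟩ := hreg
  -- the prefix words
  set P : ℕ → List ℕ := fun j => (Nat.digits b (Af j)).reverse with hP
  -- pigeonhole on the automaton states reached after the prefixes
  obtain ⟨j₀, -, j₁, -, hne, hq⟩ :=
    Finset.exists_ne_map_eq_of_card_lt_of_maps_to
      (s := Finset.range (Fintype.card σ + 1)) (t := Finset.univ)
      (by simp) (f := fun j => M.evalFrom M.start (P j)) (fun a _ => Finset.mem_univ _)
  -- wlog j < j'
  obtain ⟨j, j', hjj, hqq⟩ : ∃ j j' : ℕ, j < j' ∧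
      M.evalFrom M.start (P j) = M.evalFrom M.start (P j') := by
    rcases Nat.lt_or_ge j₀ j₁ with h | h
    · exact ⟨j₀, j₁, h, hq⟩
    · exact ⟨j₁, j₀, by omega, hq.symm⟩
  set p : ℕ := j' - j with hp
  have hp1 : 1 ≤ p := by omega
  set N₀ : ℕ := Mf j + Mf j' + j + j' + E + 1 with hN₀
  -- decomposition of words
  have decomp : ∀ (i m : ℕ), Mf i ≤ m →
      (Nat.digits b (v m)).reverse = P i ++ Z b (m - i) (v m % b ^ (m - i)) := by
    intro i m hm
    have him : i ≤ m := le_trans (hjM i) hm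
    have hdiv : v m / b ^ (m - i) = Af i := hstab i m hm
    have hsum := Nat.div_add_mod (v m) (b ^ (m - i))
    rw [hdiv] at hsum
    set r : ℕ := v m % b ^ (m - i) with hri
    have hmod : r < b ^ (m - i) := Nat.mod_lt _ (Nat.pow_pos hbpos)
    have hveq : v m = Af i * b ^ (m - i) + r := by rw [← hsum]; ring
    rw [hveq, digits_split hb1 (Af i) (hA1 i) (m - i) r hmod]
    simp [hP]
  -- key identity
  have key : ∀ m, N₀ ≤ m →
      v (m + p) + Af j * b ^ (m - j) = v m + Af j' * b ^ (m - j) := by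
    intro m hm
    have hmMj : Mf j ≤ m := by omega
    have hmj : j ≤ m := by omega
    set r : ℕ := v m % b ^ (m - j) with hr
    have hrlt : r < b ^ (m - j) := Nat.mod_lt _ (Nat.pow_pos hbpos)
    have hvm : v m = Af j * b ^ (m - j) + r := by
      conv_lhs => rw [← Nat.div_add_mod (v m) (b ^ (m - j))]
      rw [hstab j m hmMj]; ring
    have hwm : (Nat.digits b (v m)).reverse = P j ++ Z b (m - j) r := decomp j m hmMj
    -- w_m is accepted, hence so is the swapped word
    have hwmL : (Nat.digits b (v m)).reverse ∈ L := by
      rw [hL]; exact ⟨m, rfl⟩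
    have acc_iff : ∀ x : List ℕ, x ∈ M.accepts ↔ M.evalFrom M.start x ∈ M.accept :=
      fun x => DFA.mem_accepts M
    have hacc : P j' ++ Z b (m - j) r ∈ M.accepts := by
      have h1 : P j ++ Z b (m - j) r ∈ M.accepts := by
        rw [hM, ← hwm]; exact hwmL
      rw [acc_iff] at h1 ⊢
      rw [DFA.evalFrom_of_append] at h1 ⊢
      rw [← hqq]
      exact h1
    have hinL : P j' ++ Z b (m - j) r ∈ L := by rw [← hM]; exact hacc
    rw [hL] at hinL
    obtain ⟨m', hm'⟩ := hinL
    have hm'' : P j' ++ Z b (m - j) r = (Nat.digits b (v m')).reverse := hm'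
    -- length computations
    have hZlen : (Z b (m - j) r).length = m - j := Z_length hb1 hrlt
    have hlen : (Nat.digits b (v m')).length = (P j').length + (m - j) := by
      have := congrArg List.length hm''
      simpa [hZlen] using this.symm
    have hPpos : 1 ≤ (P j').length := by
      have : Af j' ≠ 0 := by have := hA1 j'; omega
      simp only [hP, List.length_reverse]
      exact List.length_pos_iff.mpr (Nat.digits_ne_nil_iff_ne_zero.mpr this)
    have hlb : m' < (Nat.digits b (v m')).length := lt_len_of_pow_le hb1 (v_lb m')
    have hub : (Nat.digits b (v m')).length ≤ m' + E := len_le_of_lt_pow hb1 (v_lt_pow m')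
    have hm'big : Mf j' ≤ m' := by omega
    have hm'j' : j' ≤ m' := le_trans (hjM j') hm'big
    -- decompose w_{m'}
    have hwm' : (Nat.digits b (v m')).reverse
        = P j' ++ Z b (m' - j') (v m' % b ^ (m' - j')) := decomp j' m' hm'big
    set r' : ℕ := v m' % b ^ (m' - j') with hr'
    have hr'lt : r' < b ^ (m' - j') := Nat.mod_lt _ (Nat.pow_pos hbpos)
    have hZZ : Z b (m - j) r = Z b (m' - j') r' :=
      List.append_cancel_left (hm''.trans hwm')
    have hklen : m - j = m' - j' := by
      have := congrArg List.length hZZ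
      rwa [hZlen, Z_length hb1 hr'lt] at this
    have hrr : r = r' := by
      have := congrArg (fun l => Nat.ofDigits b l.reverse) hZZ
      simpa [Z_val] using this
    have hm'eq : m' = m + p := by omega
    have hvm' : v m' = Af j' * b ^ (m - j) + r := by
      have hsum := Nat.div_add_mod (v m') (b ^ (m' - j'))
      rw [hstab j' m' hm'big, ← hr', ← hrr, ← hklen] at hsum
      rw [← hsum]; ring
    rw [← hm'eq, hvm', hvm]
    ring
  -- conclude ultimate periodicity
  refine ⟨N₀ + 1, p, hp1, ?_⟩
  intro n hn
  obtain ⟨m, rfl⟩ : ∃ m, n = m + 1 := ⟨n - 1, by omega⟩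
  have hm : N₀ ≤ m := by omega
  have h1 := key m hm
  have h2 := key (m + 1) (by omega)
  have hidx : m + 1 + p = (m + p) + 1 := by omega
  have hidx2 : m + 1 - j = (m - j) + 1 := by omega
  rw [hidx, v_succ (m + p), hidx2, pow_succ, v_succ m] at h2
  have goal' : u (m + p + 1) = u (m + 1) := by
    have h1' : b * (v (m + p) + Af j * b ^ (m - j)) = b * (v m + Af j' * b ^ (m - j)) := by
      rw [h1]
    zify at h1' h2 ⊢
    linear_combination h2 - h1'
  rw [hidx]
  exact goal'
end

section
/- Let u be the fixed point of the substitution A ↦ AB, B ↦ BA (Thue–Morse) read as a sequence over blocks A = 10 and B = 02, i.e., u = 1002021002101002⋯. Then u is not ultimately periodic, and hence the language L₂(u) = { binary representation of Σ_{i=0}^n u_i 2^{n−i} : n ≥ 0 } is not regular. -/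
/-- Binary digit sum. -/
def TMS (n : ℕ) : ℕ := (Nat.digits 2 n).sum

lemma TMS_two_mul (n : ℕ) : TMS (2 * n) = TMS n := by
  rcases Nat.eq_zero_or_pos n with h | h
  · simp [TMS, h]
  · rw [TMS, Nat.digits_def' (by norm_num : 1 < 2) (by omega)]
    simp [TMS, Nat.mul_div_cancel_left _ (by norm_num : 0 < 2)]

lemma TMS_two_mul_add_one (n : ℕ) : TMS (2 * n + 1) = TMS n + 1 := by
  rw [TMS, Nat.digits_def' (by norm_num : 1 < 2) (by omega)]
  have h1 : (2 * n + 1) % 2 = 1 := by omega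
  have h2 : (2 * n + 1) / 2 = n := by omega
  rw [h1, h2]
  simp [TMS, Nat.add_comm]

lemma TMS_pow (k : ℕ) : TMS (2 ^ k) = 1 := by
  induction k with
  | zero => simp [TMS]
  | succ k ih => rw [pow_succ, mul_comm, TMS_two_mul]; exact ih

lemma TMS_three_pow (k : ℕ) : TMS (3 * 2 ^ k) = 2 := by
  induction k with
  | zero => simp [TMS]
  | succ k ih =>
    have : 3 * 2 ^ (k + 1) = 2 * (3 * 2 ^ k) := by ring
    rw [this, TMS_two_mul]; exact ih

/-- The Thue–Morse parity sequence is not eventually constant. -/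
lemma TMS_not_const (N c : ℕ) : ¬ ∀ n ≥ N, TMS n % 2 = c := by
  intro h
  have hN : N ≤ 2 ^ N := Nat.le_of_lt (Nat.lt_two_pow_self (n := N))
  have h1 := h (2 ^ N) hN
  have h2 := h (3 * 2 ^ N) (le_trans hN (by nlinarith))
  rw [TMS_pow] at h1
  rw [TMS_three_pow] at h2
  omega

lemma TMS_not_succ_const (N : ℕ) (h : ∀ n ≥ N, TMS (n + 1) % 2 = TMS n % 2) : False := by
  apply TMS_not_const N (TMS N % 2)
  intro n hn
  induction n, hn using Nat.le_induction with
  | base => rfl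
  | succ n hn ih => rw [h n hn, ih]

lemma TMS_not_periodic_aux (p : ℕ) :
    1 ≤ p → ∀ N : ℕ, (∀ n ≥ N, TMS (n + p) % 2 = TMS n % 2) → False := by
  induction p using Nat.strong_induction_on with
  | _ p ih =>
  intro hp N h
  rcases Nat.even_or_odd p with ⟨q, hq⟩ | ⟨a, ha⟩
  · -- p = 2q : q is also a period
    have hq1 : 1 ≤ q := by omega
    refine ih q (by omega) hq1 N ?_
    intro n hn
    have := h (2 * n) (by omega)
    have e1 : 2 * n + p = 2 * (n + q) := by omega
    rw [e1, TMS_two_mul, TMS_two_mul] at this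
    exact this
  · -- p = 2a + 1 odd
    apply TMS_not_succ_const N
    intro m hm
    have h1 := h (2 * m) (by omega)
    have e1 : 2 * m + p = 2 * (m + a) + 1 := by omega
    rw [e1, TMS_two_mul_add_one, TMS_two_mul] at h1
    have h2 := h (2 * m + 1) (by omega)
    have e2 : 2 * m + 1 + p = 2 * (m + a + 1) := by omega
    rw [e2, TMS_two_mul, TMS_two_mul_add_one] at h2
    have h3 := h (2 * (m + 1)) (by omega)
    have e3 : 2 * (m + 1) + p = 2 * (m + 1 + a) + 1 := by omega
    rw [e3, TMS_two_mul_add_one, TMS_two_mul] at h3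
    have e4 : m + 1 + a = m + a + 1 := by omega
    rw [e4] at h3
    omega

/-- The Thue–Morse parity sequence is not ultimately periodic. -/
lemma TMS_not_periodic :
    ¬ ∃ N p : ℕ, 1 ≤ p ∧ ∀ n ≥ N, TMS (n + p) % 2 = TMS n % 2 := by
  rintro ⟨N, p, hp, h⟩
  exact TMS_not_periodic_aux p hp N h

/-- `TMA m = (4^(m+1)-4)/3 = 4 + 16 + ... + 4^m`. -/
def TMA : ℕ → ℕ
  | 0 => 0
  | m + 1 => 4 * TMA m + 4

lemma TMA_even (m : ℕ) : TMA m % 2 = 0 := by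
  induction m with
  | zero => rfl
  | succ m ih => show (4 * TMA m + 4) % 2 = 0; omega

lemma TMA_mono : Monotone TMA := by
  apply monotone_nat_of_le_succ
  intro n
  show TMA n ≤ 4 * TMA n + 4
  omega

/-- The word `(10)^m` over ℕ. -/
def TMP : ℕ → List ℕ
  | 0 => []
  | m + 1 => 1 :: 0 :: TMP m

lemma TMP_append (a b : ℕ) : TMP (a + b) = TMP a ++ TMP b := by
  induction a with
  | zero => simp [TMP]
  | succ a ih =>
    have : a + 1 + b = (a + b) + 1 := by omega
    rw [this]
    show 1 :: 0 :: TMP (a + b) = (1 :: 0 :: TMP a) ++ TMP b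
    rw [ih]; rfl

lemma TMP_rev_rot (m : ℕ) : 0 :: 1 :: (TMP m).reverse = (TMP m).reverse ++ [0, 1] := by
  induction m with
  | zero => rfl
  | succ m ih =>
    show 0 :: 1 :: (1 :: 0 :: TMP m).reverse = (1 :: 0 :: TMP m).reverse ++ [0, 1]
    have e : (1 :: 0 :: TMP m).reverse = (TMP m).reverse ++ [0, 1] := by simp
    rw [e]
    conv_rhs => rw [← ih]
    simp

lemma TMA_digits (m : ℕ) : Nat.digits 2 (TMA m + 1) = (TMP m ++ [1]).reverse := by
  induction m with
  | zero => simp [TMA, TMP]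
  | succ m ih =>
    have hpos : 0 < TMA m + 1 := by omega
    have e1 : TMA (m + 1) + 1 = 2 * (2 * (TMA m + 1)) + 1 := by
      show 4 * TMA m + 4 + 1 = 2 * (2 * (TMA m + 1)) + 1; ring
    rw [e1]
    rw [Nat.digits_def' (by norm_num : 1 < 2) (by omega)]
    have h1 : (2 * (2 * (TMA m + 1)) + 1) % 2 = 1 := by omega
    have h2 : (2 * (2 * (TMA m + 1)) + 1) / 2 = 2 * (TMA m + 1) := by omega
    rw [h1, h2, Nat.digits_def' (by norm_num : 1 < 2) (by omega)]
    have h3 : (2 * (TMA m + 1)) % 2 = 0 := by omega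
    have h4 : (2 * (TMA m + 1)) / 2 = TMA m + 1 := by omega
    rw [h3, h4, ih]
    show 1 :: 0 :: (TMP m ++ [1]).reverse = ((1 :: 0 :: TMP m) ++ [1]).reverse
    simp [← TMP_rev_rot]

/-- The Thue–Morse block sequence over {0,1,2}: the Thue–Morse sequence over {A,B}
(A at position n iff the binary digit sum of n is even) with A replaced by the
block 10 and B by the block 02. -/
theorem stmt_15 (u : ℕ → ℕ)
    (hu : ∀ n : ℕ,
      (u (2 * n) = if (Nat.digits 2 n).sum % 2 = 0 then 1 else 0) ∧
      (u (2 * n + 1) = if (Nat.digits 2 n).sum % 2 = 0 then 0 else 2))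
    (L : Language ℕ)
    (hL : L = {w : List ℕ | ∃ n : ℕ,
      w = (Nat.digits 2 (∑ i ∈ Finset.range (n + 1), u i * 2 ^ (n - i))).reverse}) :
    (¬ ∃ N p : ℕ, 1 ≤ p ∧ ∀ n ≥ N, u (n + p) = u n) ∧ ¬ L.IsRegular := by
  -- rewrite hu in terms of TMS
  have hu0 : ∀ n, u (2 * n) = if TMS n % 2 = 0 then 1 else 0 := fun n => (hu n).1
  have hu1 : ∀ n, u (2 * n + 1) = if TMS n % 2 = 0 then 0 else 2 := fun n => (hu n).2
  set V : ℕ → ℕ := fun n => ∑ i ∈ Finset.range (n + 1), u i * 2 ^ (n - i) with hV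
  have V_succ : ∀ n, V (n + 1) = 2 * V n + u (n + 1) := by
    intro n
    rw [hV]
    simp only
    rw [Finset.sum_range_succ]
    have : ∀ i ∈ Finset.range (n + 1), u i * 2 ^ (n + 1 - i) = 2 * (u i * 2 ^ (n - i)) := by
      intro i hi
      rw [Finset.mem_range] at hi
      have : n + 1 - i = (n - i) + 1 := by omega
      rw [this, pow_succ]; ring
    rw [Finset.sum_congr rfl this, ← Finset.mul_sum]
    simp
  have V_formula : ∀ m, V (2 * m) = TMA m + (if TMS m % 2 = 0 then 1 else 0) ∧
      V (2 * m + 1) = 2 * TMA m + 2 := by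
    intro m
    induction m with
    | zero =>
      constructor
      · show V 0 = TMA 0 + _
        have : V 0 = u 0 := by simp [hV]
        rw [this]
        have := hu0 0
        simp only [mul_zero] at this
        rw [this]
        simp [TMA, TMS]
      · have e : 2 * 0 + 1 = 0 + 1 := by norm_num
        rw [e, V_succ 0]
        have h0 : V 0 = u 0 := by simp [hV]
        have hu0' := hu0 0
        simp only [mul_zero] at hu0'
        have hu1' := hu1 0
        simp only [mul_zero, zero_add] at hu1'
        have hs0 : TMS 0 % 2 = 0 := by simp [TMS]
        rw [h0, hu0', hu1', if_pos hs0, if_pos hs0]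
        simp [TMA]
    | succ m ih =>
      obtain ⟨ihe, iho⟩ := ih
      have e1 : 2 * (m + 1) = (2 * m + 1) + 1 := by ring
      have heven : V (2 * (m + 1)) = TMA (m + 1) + (if TMS (m + 1) % 2 = 0 then 1 else 0) := by
        rw [e1, V_succ, iho]
        rw [← e1, hu0 (m + 1)]
        show 2 * (2 * TMA m + 2) + _ = (4 * TMA m + 4) + _
        ring_nf
      constructor
      · exact heven
      · have e2 : 2 * (m + 1) + 1 = (2 * (m + 1)) + 1 := rfl
        rw [e2, V_succ, heven, hu1 (m + 1)]
        by_cases h : TMS (m + 1) % 2 = 0 <;> simp [h] <;> ring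
  -- membership characterization
  have mem_iff : ∀ m, (TMP m ++ [1]) ∈ L ↔ TMS m % 2 = 0 := by
    intro m
    rw [hL]
    constructor
    · rintro ⟨n, hn⟩
      have h' : Nat.digits 2 (TMA m + 1) = Nat.digits 2 (V n) := by
        rw [TMA_digits, hn, List.reverse_reverse]
      have hVn : V n = TMA m + 1 := by
        have := congrArg (Nat.ofDigits 2) h'
        rw [Nat.ofDigits_digits, Nat.ofDigits_digits] at this
        exact this.symm
      rcases Nat.even_or_odd n with ⟨k, hk⟩ | ⟨k, hk⟩
      · have hke : n = 2 * k := by omega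
        rw [hke, (V_formula k).1] at hVn
        by_cases hs : TMS k % 2 = 0
        · -- TMA k + 1 = TMA m + 1, so k = m
          rw [if_pos hs] at hVn
          have hkm : k = m := by
            by_contra hne
            rcases Nat.lt_or_ge k m with hlt | hge
            · have h1 : TMA (k + 1) ≤ TMA m := TMA_mono hlt
              have h2 : TMA (k + 1) = 4 * TMA k + 4 := rfl
              omega
            · have hlt : m < k := by omega
              have h1 : TMA (m + 1) ≤ TMA k := TMA_mono hlt
              have h2 : TMA (m + 1) = 4 * TMA m + 4 := rfl
              omega
          rw [← hkm]; exact hs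
        · rw [if_neg hs] at hVn
          -- TMA k + 0 = TMA m + 1 : impossible by parity/monotonicity
          exfalso
          have hkm : ¬ k = m := by intro h; rw [h] at hVn; omega
          rcases Nat.lt_or_ge k m with hlt | hge
          · have h1 : TMA (k + 1) ≤ TMA m := TMA_mono hlt
            have h2 : TMA (k + 1) = 4 * TMA k + 4 := rfl
            omega
          · have hlt : m < k := by omega
            have h1 : TMA (m + 1) ≤ TMA k := TMA_mono hlt
            have h2 : TMA (m + 1) = 4 * TMA m + 4 := rfl
            omega
      · have hko : n = 2 * k + 1 := by omega
        rw [hko, (V_formula k).2] at hVn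
        have := TMA_even m
        omega
    · intro hs
      refine ⟨2 * m, ?_⟩
      show TMP m ++ [1] = (Nat.digits 2 (V (2 * m))).reverse
      rw [(V_formula m).1, if_pos hs, TMA_digits]
      simp
  constructor
  · -- u is not ultimately periodic
    rintro ⟨N, p, hp, h⟩
    rcases Nat.even_or_odd p with ⟨q, hq⟩ | ⟨a, ha⟩
    · -- even period
      apply TMS_not_periodic
      refine ⟨N, q, by omega, ?_⟩
      intro n hn
      have := h (2 * n) (by omega)
      have e1 : 2 * n + p = 2 * (n + q) := by omega
      rw [e1, hu0, hu0] at this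
      by_cases h1 : TMS (n + q) % 2 = 0 <;> by_cases h2 : TMS n % 2 = 0 <;>
        simp [h1, h2] at this ⊢ <;> omega
    · -- odd period : forces u(2n) = 0 eventually, i.e. TMS constant 1
      apply TMS_not_const (N + 1) 1
      intro n hn
      have := h (2 * n) (by omega)
      have e1 : 2 * n + p = 2 * (n + a) + 1 := by omega
      rw [e1, hu0, hu1] at this
      by_cases h1 : TMS (n + a) % 2 = 0 <;> by_cases h2 : TMS n % 2 = 0 <;>
        simp [h1, h2] at this ⊢ <;> omega
  · -- L is not regular
    rintro ⟨σ, fσ, M, hM⟩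
    have key : ∀ m1 m2 : ℕ, M.eval (TMP m1) = M.eval (TMP m2) →
        ∀ t, (TMS (m1 + t) % 2 = 0 ↔ TMS (m2 + t) % 2 = 0) := by
      intro m1 m2 heq t
      have e : ∀ m : ℕ, (TMP m ++ (TMP t ++ [1])) = TMP (m + t) ++ [1] := by
        intro m; rw [TMP_append, List.append_assoc]
      have hacc : ∀ m : ℕ, (TMP (m + t) ++ [1]) ∈ M.accepts ↔
          M.evalFrom (M.eval (TMP m)) (TMP t ++ [1]) ∈ M.accept := by
        intro m
        rw [← e m, DFA.mem_accepts]
        show M.evalFrom M.start _ ∈ M.accept ↔ _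
        rw [DFA.evalFrom_of_append]
        rfl
      have h1 := hacc m1
      have h2 := hacc m2
      rw [heq] at h1
      rw [hM, mem_iff] at h1 h2
      rw [h1, h2]
    -- pigeonhole
    obtain ⟨m1, m2, hne, heq⟩ :=
      Finite.exists_ne_map_eq_of_infinite (fun m : ℕ => M.eval (TMP m))
    apply TMS_not_periodic
    rcases Nat.lt_or_ge m1 m2 with hlt | hge
    · refine ⟨m1, m2 - m1, by omega, ?_⟩
      intro n hn
      have := key m1 m2 heq (n - m1)
      have e1 : m1 + (n - m1) = n := by omega
      have e2 : m2 + (n - m1) = n + (m2 - m1) := by omega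
      rw [e1, e2] at this
      have a1 := Nat.mod_two_eq_zero_or_one (TMS (n + (m2 - m1)))
      have a2 := Nat.mod_two_eq_zero_or_one (TMS n)
      rcases a1 with b1 | b1 <;> rcases a2 with b2 | b2 <;> rw [b1, b2] <;>
        simp [b1, b2] at this ⊢
    · have hlt : m2 < m1 := by omega
      refine ⟨m2, m1 - m2, by omega, ?_⟩
      intro n hn
      have := key m1 m2 heq (n - m2)
      have e1 : m2 + (n - m2) = n := by omega
      have e2 : m1 + (n - m2) = n + (m1 - m2) := by omega
      rw [e1, e2] at this
      have a1 := Nat.mod_two_eq_zero_or_one (TMS (n + (m1 - m2)))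
      have a2 := Nat.mod_two_eq_zero_or_one (TMS n)
      rcases a1 with b1 | b1 <;> rcases a2 with b2 | b2 <;> rw [b1, b2] <;>
        simp [b1, b2] at this ⊢
end

section
/- Let α, β ∈ ℝ and b ≥ 2 an integer. If α is rational, then the sequence u_n = ⌊log_b(αn + β)⌋ is b-regular. -/
lemma aux_floor_logb (b : ℕ) (hb : 2 ≤ b) (x : ℝ) (k : ℕ)
    (h1 : (b:ℝ)^k ≤ x) (h2 : x < (b:ℝ)^(k+1)) : ⌊Real.logb b x⌋ = k := by
  have hb1 : (1:ℝ) < b := by exact_mod_cast hb.trans_lt' one_lt_two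
  have hbpos : (0:ℝ) < b := by linarith
  have hxpos : 0 < x := lt_of_lt_of_le (pow_pos hbpos k) h1
  have hlogpow : ∀ m : ℕ, Real.logb b ((b:ℝ)^m) = m := by
    intro m
    rw [Real.logb_pow, Real.logb_self_eq_one hb1]
    · ring
  have hlo : (k:ℝ) ≤ Real.logb b x := by
    have := Real.logb_le_logb_of_le hb1 (pow_pos hbpos k) h1
    rwa [hlogpow k] at this
  have hhi : Real.logb b x < (k:ℝ) + 1 := by
    have := Real.logb_lt_logb hb1 hxpos h2
    rw [hlogpow (k+1)] at this
    push_cast at this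
    linarith
  rw [Int.floor_eq_iff]
  constructor <;> push_cast <;> [exact hlo; exact hhi]

lemma aux_mul_le (A B d bi : ℕ) (h : 0 < bi) : A ≤ B + d / bi ↔ A * bi ≤ B * bi + d := by
  rw [show B + d / bi = (bi * B + d) / bi from (Nat.mul_add_div h B d).symm,
    Nat.le_div_iff_mul_le h, Nat.mul_comm bi B]

lemma aux_log_shift (b p q i n d : ℕ) (hb : 2 ≤ b) (hq : 0 < q)
    (h1 : q ≤ p * n + d / b ^ i) :
    Nat.log b ((p * (b ^ i * n) + d) / q) = Nat.log b ((p * n + d / b ^ i) / q) + i := by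
  have hb1 : 1 < b := hb
  have hbi : 0 < b ^ i := pow_pos (by omega) i
  set k := Nat.log b ((p * n + d / b ^ i) / q) with hk
  have key : ∀ m : ℕ, q * b ^ m ≤ p * n + d / b ^ i ↔
      q * b ^ (m + i) ≤ p * (b ^ i * n) + d := by
    intro m
    have h2 := aux_mul_le (q * b ^ m) (p * n) d (b ^ i) hbi
    have e1 : q * b ^ m * b ^ i = q * b ^ (m + i) := by rw [pow_add]; ring
    have e2 : p * n * b ^ i = p * (b ^ i * n) := by ring
    rw [e1, e2] at h2
    exact h2
  have hm1 : (p * n + d / b ^ i) / q ≠ 0 := by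
    have : 1 ≤ (p * n + d / b ^ i) / q := (Nat.one_le_div_iff hq).mpr h1
    omega
  have hlow : b ^ k ≤ (p * n + d / b ^ i) / q := Nat.pow_log_le_self b hm1
  have hlow' : q * b ^ k ≤ p * n + d / b ^ i := by
    rw [Nat.le_div_iff_mul_le hq] at hlow
    rw [Nat.mul_comm q (b ^ k)]
    exact hlow
  have hup : (p * n + d / b ^ i) / q < b ^ (k + 1) := Nat.lt_pow_succ_log_self hb1 _
  have hup' : p * n + d / b ^ i < q * b ^ (k + 1) := by
    rw [Nat.div_lt_iff_lt_mul hq] at hup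
    rw [Nat.mul_comm q (b ^ (k + 1))]
    exact hup
  have hA : q * b ^ (k + i) ≤ p * (b ^ i * n) + d := (key k).mp hlow'
  have hB : p * (b ^ i * n) + d < q * b ^ (k + 1 + i) := by
    by_contra hc
    push_neg at hc
    exact absurd ((key (k + 1)).mpr hc) (by omega)
  have hMlow : b ^ (k + i) ≤ (p * (b ^ i * n) + d) / q := by
    rw [Nat.le_div_iff_mul_le hq, Nat.mul_comm (b ^ (k + i)) q]
    exact hA
  have hMne : (p * (b ^ i * n) + d) / q ≠ 0 := by
    have : 0 < b ^ (k + i) := pow_pos (by omega) _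
    omega
  apply le_antisymm
  · have hlt : (p * (b ^ i * n) + d) / q < b ^ (k + i + 1) := by
      rw [Nat.div_lt_iff_lt_mul hq, Nat.mul_comm (b ^ (k + i + 1)) q,
        show k + i + 1 = k + 1 + i from by omega]
      exact hB
    have := (Nat.log_lt_iff_lt_pow hb1 hMne).mpr hlt
    omega
  · exact (Nat.le_log_iff_pow_le hb1 hMne).mpr hMlow

theorem stmt_16 (α β : ℝ) (b : ℕ) (hb : 2 ≤ b)
    (hα : ∃ q : ℚ, α = (q : ℝ)) (hαpos : 0 < α) (hpos : ∀ n : ℕ, 0 < α * n + β)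
    (u : ℕ → ℤ) (hu : ∀ n, u n = ⌊Real.logb b (α * n + β)⌋) :
    (Submodule.span ℤ {g : ℕ → ℤ | ∃ i j : ℕ, j < b ^ i ∧
      g = fun n => u (b ^ i * n + j)}).FG := by
  obtain ⟨r, hr⟩ := hα
  have hrpos : 0 < r := by
    rw [hr] at hαpos
    exact_mod_cast hαpos
  set p : ℕ := r.num.toNat with hp_def
  set q : ℕ := r.den with hq_def
  have hp : 0 < p := by
    have := Rat.num_pos.mpr hrpos
    omega
  have hq : 0 < q := r.pos
  have hαpq : α = (p : ℝ) / (q : ℝ) := by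
    rw [hr, Rat.cast_def]
    congr 1
    rw [hp_def]
    exact_mod_cast (Int.toNat_of_nonneg (Rat.num_pos.mpr hrpos).le).symm
  have hqR : (0:ℝ) < (q:ℝ) := by exact_mod_cast hq
  have hβ : 0 < β := by simpa using hpos 0
  have hfl0 : (0:ℤ) ≤ ⌊(q:ℝ) * β⌋ := Int.floor_nonneg.mpr (by positivity)
  set c : ℕ := (⌊(q:ℝ) * β⌋).toNat with hc_def
  have hceq : (c : ℝ) = ((⌊(q:ℝ) * β⌋ : ℤ) : ℝ) := by
    rw [hc_def]
    exact_mod_cast congrArg (Int.cast : ℤ → ℝ) (Int.toNat_of_nonneg hfl0)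
  have hcle : (c : ℝ) ≤ (q:ℝ) * β := by
    rw [hceq]; exact Int.floor_le _
  have hclt : (q:ℝ) * β < (c : ℝ) + 1 := by
    rw [hceq]; exact Int.lt_floor_add_one _
  -- Step 1: arithmetic formula for u
  have hA : ∀ m : ℕ, q ≤ p * m + c → u m = (Nat.log b ((p * m + c) / q) : ℤ) := by
    intro m hm
    set k := Nat.log b ((p * m + c) / q) with hk
    have hne : (p * m + c) / q ≠ 0 := by
      have : 1 ≤ (p * m + c) / q := (Nat.one_le_div_iff hq).mpr hm
      omega
    have hk1 : q * b ^ k ≤ p * m + c := by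
      have h := Nat.pow_log_le_self b hne
      rw [Nat.le_div_iff_mul_le hq] at h
      rw [Nat.mul_comm q (b ^ k)]
      exact h
    have hk2 : p * m + c < q * b ^ (k + 1) := by
      have h := Nat.lt_pow_succ_log_self (show 1 < b from hb) ((p * m + c) / q)
      rw [Nat.div_lt_iff_lt_mul hq] at h
      rw [Nat.mul_comm q (b ^ (k + 1))]
      exact h
    have hqx : (q:ℝ) * (α * m + β) = (p:ℝ) * m + (q:ℝ) * β := by
      rw [hαpq]; field_simp
    rw [hu m]
    apply aux_floor_logb b hb _ k
    · have h1 : (q:ℝ) * (b:ℝ) ^ k ≤ (p:ℝ) * m + (c:ℝ) := by exact_mod_cast hk1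
      have h2 : (q:ℝ) * (b:ℝ) ^ k ≤ (q:ℝ) * (α * m + β) := by
        rw [hqx]; linarith
      exact le_of_mul_le_mul_left h2 hqR
    · have h1 : (p:ℝ) * m + (c:ℝ) + 1 ≤ (q:ℝ) * (b:ℝ) ^ (k + 1) := by
        have h : p * m + c + 1 ≤ q * b ^ (k + 1) := hk2
        exact_mod_cast h
      have h2 : (q:ℝ) * (α * m + β) < (q:ℝ) * (b:ℝ) ^ (k + 1) := by
        rw [hqx]; linarith
      exact lt_of_mul_lt_mul_left h2 hqR.le
  -- Step 2: kernel sequences for n ≥ q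
  have hB : ∀ i j n : ℕ, j < b ^ i → q ≤ n →
      u (b ^ i * n + j) = (i : ℤ) + (Nat.log b ((p * n + (p * j + c) / b ^ i) / q) : ℤ) := by
    intro i j n hj hn
    have hbi : 0 < b ^ i := pow_pos (by omega) i
    have hnle : n ≤ b ^ i * n := Nat.le_mul_of_pos_left n hbi
    have hple : ∀ x : ℕ, x ≤ p * x := fun x => Nat.le_mul_of_pos_left x hp
    have harg : q ≤ p * (b ^ i * n + j) + c :=
      le_trans (le_trans (le_trans (hn.trans hnle) (Nat.le_add_right _ j))
        (hple _)) (Nat.le_add_right _ c)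
    rw [hA _ harg]
    have he1 : q ≤ p * n + (p * j + c) / b ^ i :=
      le_trans (hn.trans (hple n)) (Nat.le_add_right _ _)
    have hshift := aux_log_shift b p q i n (p * j + c) hb hq he1
    have harg2 : p * (b ^ i * n + j) + c = p * (b ^ i * n) + (p * j + c) := by ring
    rw [harg2, hshift]
    push_cast
    ring
  -- Step 3: generators
  set W : ℕ → ℕ → ℤ := fun e n => (Nat.log b ((p * n + e) / q) : ℤ) with hW
  set δ : ℕ → ℕ → ℤ := fun m n => if n = m then 1 else 0 with hδ
  set one : ℕ → ℤ := fun _ => 1 with hone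
  set G : Set (ℕ → ℤ) := insert one ((W '' Set.Iic (p + c)) ∪ (δ '' Set.Iio q)) with hG
  have hGfin : G.Finite :=
    (((Set.finite_Iic (p + c)).image W).union ((Set.finite_Iio q).image δ)).insert one
  have hsub : {g : ℕ → ℤ | ∃ i j : ℕ, j < b ^ i ∧ g = fun n => u (b ^ i * n + j)} ⊆
      ↑(Submodule.span ℤ G) := by
    rintro g ⟨i, j, hj, rfl⟩
    have hbi : 0 < b ^ i := pow_pos (by omega) i
    have he' : (p * j + c) / b ^ i ≤ p + c := by
      have h0 : p * j ≤ b ^ i * p := by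
        rw [Nat.mul_comm (b ^ i) p]
        exact Nat.mul_le_mul (le_refl p) hj.le
      have h1 : p * j + c ≤ b ^ i * p + c := by omega
      calc (p * j + c) / b ^ i ≤ (b ^ i * p + c) / b ^ i := Nat.div_le_div_right h1
        _ = p + c / b ^ i := Nat.mul_add_div hbi p c
        _ ≤ p + c := by have := Nat.div_le_self c (b ^ i); omega
    have key : (fun n => u (b ^ i * n + j)) =
        (i : ℤ) • one + W ((p * j + c) / b ^ i) + ∑ m ∈ Finset.range q,
          (u (b ^ i * m + j) - (i : ℤ) - W ((p * j + c) / b ^ i) m) • δ m := by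
      funext n
      simp only [Pi.add_apply, Pi.smul_apply, Finset.sum_apply, smul_eq_mul]
      have hsum : ∀ v : ℕ → ℤ, (∑ m ∈ Finset.range q, v m * δ m n) =
          if n ∈ Finset.range q then v n else 0 := by
        intro v
        rw [← Finset.sum_ite_eq (Finset.range q) n v]
        apply Finset.sum_congr rfl
        intro m _
        simp only [hδ, mul_ite, mul_one, mul_zero]
      rw [hsum]
      by_cases hn : n < q
      · rw [if_pos (Finset.mem_range.mpr hn)]
        simp only [hone]
        ring
      · rw [if_neg (by simpa [Finset.mem_range] using hn)]
        rw [hB i j n hj (Nat.le_of_not_lt hn)]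
        simp only [hW, hone]
        ring
    rw [key]
    refine Submodule.add_mem _ (Submodule.add_mem _ ?_ ?_) ?_
    · exact Submodule.smul_mem _ _ (Submodule.subset_span (Set.mem_insert _ _))
    · exact Submodule.subset_span
        (Set.mem_insert_iff.mpr (Or.inr (Or.inl ⟨(p * j + c) / b ^ i, he', rfl⟩)))
    · refine Submodule.sum_mem _ fun m hm =>
        Submodule.smul_mem _ _ (Submodule.subset_span ?_)
      exact Set.mem_insert_iff.mpr (Or.inr (Or.inr ⟨m, Set.mem_Iio.mpr
        (Finset.mem_range.mp hm), rfl⟩))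
  have hle : Submodule.span ℤ {g : ℕ → ℤ | ∃ i j : ℕ, j < b ^ i ∧
      g = fun n => u (b ^ i * n + j)} ≤ Submodule.span ℤ G := Submodule.span_le.mpr hsub
  have hfg : (Submodule.span ℤ G).FG := Submodule.fg_span hGfin
  haveI := isNoetherian_of_fg_of_noetherian (Submodule.span ℤ G) hfg
  have hN := IsNoetherian.noetherian
    ((Submodule.span ℤ {g : ℕ → ℤ | ∃ i j : ℕ, j < b ^ i ∧
      g = fun n => u (b ^ i * n + j)}).comap (Submodule.span ℤ G).subtype)
  have hmap := hN.map (Submodule.span ℤ G).subtype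
  rw [Submodule.map_comap_subtype, inf_eq_right.mpr hle] at hmap
  exact hmap
end
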